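/- arXiv:2601.22049 — 6 statements merged into one kernel-verified Lean document; each statement's English description precedes it below -/
import Mathlib

section
/- Let n be a positive integer. Every matrix τ ∈ GL₂(Z/n) with det τ = -1 and tr τ = 0 is conjugate by an element of SL₂(Z/n) to one of the following matrices: diag(1,-1); or, if n is even, the matrix [[0,1],[1,0]]; or, if 4 divides n, the matrix [[1,2],[n/2,-1]]. -/
namespace Stmt8


variable {R : Type*} [CommRing R]

/-- trace-zero 2x2 matrix from a triple -/
def M (a b c : R) : Matrix (Fin 2) (Fin 2) R := !![a, b; c, -a]

def Conj (A B : Matrix (Fin 2) (Fin 2) R) : Prop :=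
  ∃ P, P.det = 1 ∧ A * P = P * B

lemma M_congr {a b c a' b' c' : R} (h1 : a = a') (h2 : b = b') (h3 : c = c') :
    M a b c = M a' b' c' := by rw [h1, h2, h3]

lemma conj_mk {a b c a' b' c' p q r s : R}
    (hdet : p * s - q * r = 1)
    (e11 : a * p + b * r = p * a' + q * c')
    (e12 : a * q + b * s = p * b' + q * (-a'))
    (e21 : c * p + (-a) * r = r * a' + s * c')
    (e22 : c * q + (-a) * s = r * b' + s * (-a')) :
    Conj (M a b c) (M a' b' c') := by
  refine ⟨!![p, q; r, s], by simp [Matrix.det_fin_two_of, hdet], ?_⟩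
  show (!![a, b; c, -a] : Matrix (Fin 2) (Fin 2) R) * _ = _ * !![a', b'; c', -a']
  rw [Matrix.mul_fin_two, Matrix.mul_fin_two, e11, e12, e21, e22]

lemma Conj.refl (A : Matrix (Fin 2) (Fin 2) R) : Conj A A :=
  ⟨1, Matrix.det_one, by rw [mul_one, one_mul]⟩

lemma Conj.trans {A B C : Matrix (Fin 2) (Fin 2) R} (h1 : Conj A B) (h2 : Conj B C) :
    Conj A C := by
  obtain ⟨P, hP, hAB⟩ := h1
  obtain ⟨Q, hQ, hBC⟩ := h2
  exact ⟨P * Q, by rw [Matrix.det_mul, hP, hQ, one_mul],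
    by rw [← mul_assoc, hAB, mul_assoc, hBC, mul_assoc]⟩

lemma Conj.symm {A B : Matrix (Fin 2) (Fin 2) R} (h : Conj A B) : Conj B A := by
  obtain ⟨P, hP, hAB⟩ := h
  have hPQ : P * P.adjugate = 1 := by rw [Matrix.mul_adjugate, hP, one_smul]
  have hQP : P.adjugate * P = 1 := by rw [Matrix.adjugate_mul, hP, one_smul]
  refine ⟨P.adjugate, by rw [Matrix.det_adjugate, hP, one_pow], ?_⟩
  calc B * P.adjugate = P.adjugate * (P * B) * P.adjugate := by
        rw [← mul_assoc, hQP, one_mul]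
    _ = P.adjugate * (A * P) * P.adjugate := by rw [hAB]
    _ = P.adjugate * A * (P * P.adjugate) := by rw [← mul_assoc, mul_assoc (P.adjugate * A)]
    _ = P.adjugate * A := by rw [hPQ, mul_one]

lemma Conj.det_eq {A B : Matrix (Fin 2) (Fin 2) R} (h : Conj A B) : A.det = B.det := by
  obtain ⟨P, hP, hAB⟩ := h
  have := congrArg Matrix.det hAB
  rwa [Matrix.det_mul, Matrix.det_mul, hP, mul_one, one_mul] at this

lemma det_M (a b c : R) : (M a b c).det = -(a ^ 2) - b * c := by
  simp [M, Matrix.det_fin_two_of]; ring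

lemma rel_of_conj {a b c a' b' c' : R} (h : Conj (M a b c) (M a' b' c'))
    (hrel : a ^ 2 + b * c = 1) : a' ^ 2 + b' * c' = 1 := by
  have := h.det_eq
  rw [det_M, det_M] at this
  linear_combination hrel + this

/-- conjugation by upper unitriangular [[1,t],[0,1]] -/
lemma conjU (a b c t : R) :
    Conj (M a b c) (M (a - t * c) (b + 2 * t * a - t ^ 2 * c) c) :=
  conj_mk (p := 1) (q := t) (r := 0) (s := 1) (by ring) (by ring) (by ring) (by ring) (by ring)

/-- conjugation by lower unitriangular [[1,0],[s,1]] -/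
lemma conjL (a b c s : R) :
    Conj (M a b c) (M (a + s * b) b (c - 2 * s * a - s ^ 2 * b)) :=
  conj_mk (p := 1) (q := 0) (r := s) (s := 1) (by ring) (by ring) (by ring) (by ring) (by ring)

/-- conjugation by S = [[0,1],[-1,0]] -/
lemma conjS (a b c : R) : Conj (M a b c) (M (-a) (-c) (-b)) :=
  conj_mk (p := 0) (q := 1) (r := -1) (s := 0) (by ring) (by ring) (by ring) (by ring) (by ring)



lemma self_cast {N : ℕ} [NeZero N] (x : ZMod N) : ((x.val : ℕ) : ZMod N) = x := by
  rw [ZMod.natCast_val, ZMod.cast_id]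

lemma one_ne_even {N : ℕ} (hN : 2 ∣ N) (z : ZMod N) (h : (1 : ZMod N) = 2 * z) : False := by
  have h2 := congrArg (ZMod.castHom hN (ZMod 2)) h
  rw [map_one, map_mul, map_ofNat] at h2
  rw [show ((2 : ZMod 2)) = 0 from rfl, zero_mul] at h2
  exact one_ne_zero h2

lemma par {N : ℕ} [NeZero N] (x : ZMod N) : (∃ y, x = 2 * y) ∨ (∃ y, x = 2 * y + 1) := by
  rcases Nat.even_or_odd x.val with ⟨k, hk⟩ | ⟨k, hk⟩
  · left; exact ⟨(k : ZMod N), by rw [← self_cast x, hk]; push_cast; ring⟩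
  · right; exact ⟨(k : ZMod N), by rw [← self_cast x, hk]; push_cast; ring⟩

lemma odd_unit {e : ℕ} (he : 0 < e) (y : ZMod (2 ^ e)) : ∃ z, (2 * y + 1) * z = 1 := by
  haveI : NeZero (2 ^ e) := ⟨(pow_pos (by norm_num) e).ne'⟩
  set x := 2 * y + 1 with hx
  have hodd : Odd x.val := by
    rcases Nat.even_or_odd x.val with ⟨k, hk⟩ | h
    · exfalso
      apply one_ne_even (N := 2 ^ e) (dvd_pow_self 2 he.ne') (↑k - y)
      have hh : x = 2 * (k : ZMod (2 ^ e)) := by rw [← self_cast x, hk]; push_cast; ring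
      rw [hx] at hh
      linear_combination hh
    · exact h
  have hu : IsUnit x := by
    rw [← self_cast x, ZMod.isUnit_iff_coprime]
    exact Nat.Coprime.pow_right _ (Nat.coprime_two_right.mpr hodd)
  exact hu.exists_right_inv

lemma ann4 {e : ℕ} (he : 2 ≤ e) (x : ZMod (2 ^ e)) (h : 4 * x = 0) :
    ∃ w, x = 2 ^ (e - 2) * w := by
  haveI : NeZero (2 ^ e) := ⟨(pow_pos (by norm_num) e).ne'⟩
  have h4 : ((4 * x.val : ℕ) : ZMod (2 ^ e)) = 0 := by push_cast [self_cast]; exact h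
  rw [ZMod.natCast_eq_zero_iff] at h4
  obtain ⟨j, hj⟩ := h4
  have h2 : (2 : ℕ) ^ e = 4 * 2 ^ (e - 2) := by
    rw [show (4:ℕ) = 2^2 by norm_num, ← pow_add]; congr 1; omega
  have hj' : 4 * x.val = 4 * (2 ^ (e - 2) * j) := by rw [hj, h2]; ring
  have hv : x.val = 2 ^ (e - 2) * j := Nat.eq_of_mul_eq_mul_left (by norm_num) hj'
  exact ⟨(j : ZMod (2 ^ e)), by rw [← self_cast x, hv]; push_cast; ring⟩

lemma nonunit_dvd {p e : ℕ} (hp : p.Prime) (he : 0 < e) (x : ZMod (p ^ e))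
    (h : ¬IsUnit x) : (p : ZMod (p ^ e)) ∣ x := by
  haveI : NeZero (p ^ e) := ⟨(pow_pos hp.pos e).ne'⟩
  obtain ⟨j, hj⟩ : p ∣ x.val := by
    by_contra hd
    exact h (by
      rw [← self_cast x, ZMod.isUnit_iff_coprime, Nat.coprime_pow_right_iff he]
      exact Nat.coprime_comm.mp (hp.coprime_iff_not_dvd.mpr hd))
  exact ⟨(j : ZMod (p ^ e)), by rw [← self_cast x, hj]; push_cast; ring⟩

lemma p_not_unit {p e : ℕ} (hp : p.Prime) (he : 0 < e) : ¬IsUnit ((p : ℕ) : ZMod (p ^ e)) := by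
  rw [ZMod.isUnit_iff_coprime, Nat.coprime_pow_right_iff he]
  intro hc
  have : Nat.gcd p p = 1 := hc
  rw [Nat.gcd_self] at this
  exact hp.ne_one this


variable {R : Type*} [CommRing R]

lemma odd_core (a b c t s k : R) (hrel : a ^ 2 + b * c = 1)
    (hk : k * (2 * (c + t * (1 - a) - s * (a + 1) - s * t * b)) = 1) :
    Conj (M a b c) (M 1 0 0) := by
  apply conj_mk (p := k * (a + 1 + t * b)) (q := a - 1 + s * b)
    (r := k * (c + t * (1 - a))) (s := c - s * (a + 1))
  · linear_combination hk + k * (t - s) * hrel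
  · linear_combination k * hrel
  · linear_combination hrel
  · linear_combination k * t * hrel
  · linear_combination s * hrel

lemma conj_A_D (i2 : R) (h : 2 * i2 = 1) : Conj (M (0:R) 1 1) (M 1 0 0) := by
  apply conj_mk (p := 1) (q := -i2) (r := 1) (s := i2)
  · linear_combination h
  · ring
  · linear_combination -h + h
  · ring
  · ring

lemma conj_C0_D : Conj (M (1:R) 2 0) (M 1 0 0) := by
  apply conj_mk (p := 1) (q := -1) (r := 0) (s := 1) <;> ring

lemma odd_pp {p e : ℕ} (hp : p.Prime) (hne : p ≠ 2) (he : 0 < e)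
    (a b c : ZMod (p ^ e)) (hrel : a ^ 2 + b * c = 1) :
    Conj (M a b c) (M 1 0 0) := by
  have h2 : IsUnit (2 : ZMod (p ^ e)) := by
    have : IsUnit ((2 : ℕ) : ZMod (p ^ e)) := by
      rw [ZMod.isUnit_iff_coprime]
      exact Nat.Coprime.pow_right _ (Nat.coprime_two_left.mpr (hp.odd_of_ne_two hne))
    exact_mod_cast this
  have key : ∃ t s : ZMod (p ^ e), IsUnit (c + t * (1 - a) - s * (a + 1) - s * t * b) := by
    by_contra hno
    push_neg at hno
    have h00 := hno 0 0
    have h10 := hno 1 0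
    have h01 := hno 0 1
    have d00 := nonunit_dvd hp he _ h00
    have d10 := nonunit_dvd hp he _ h10
    have d01 := nonunit_dvd hp he _ h01
    have hdvd2 : ((p : ℕ) : ZMod (p ^ e)) ∣ (2 : ZMod (p ^ e)) := by
      have := dvd_sub d10 d01
      have e2 : (c + 1 * (1 - a) - 0 * (a + 1) - 0 * 1 * b) -
          (c + 0 * (1 - a) - 1 * (a + 1) - 1 * 0 * b) = 2 := by ring
      rwa [e2] at this
    exact p_not_unit hp he (isUnit_of_dvd_unit hdvd2 h2)
  obtain ⟨t, s, hg⟩ := key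
  obtain ⟨k, hk⟩ := (h2.mul hg).exists_right_inv
  exact odd_core a b c t s k hrel (by linear_combination hk)


/-! ### generic pieces for the 2-power case -/

/-- `[[0,1],[1,0]] ~ [[1,0],[1,-1]]` over any ring -/
lemma conj_A_101 : Conj (M (0:R) 1 1) (M 1 0 1) := by
  have h := conjU (0:R) 1 1 (-1)
  have e : M ((0:R) - (-1) * 1) (1 + 2 * (-1) * 0 - (-1) ^ 2 * 1) 1 = M (1:R) 0 1 :=
    M_congr (by ring) (by ring) rfl
  rwa [e] at h

/-- the key conjugation for `a` even (case 1 / case 2 with `c` odd handled elsewhere):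
`[[0,b'],[c,0]]` with `b'*c = 1`, `c = 2*h0+1`, is conjugate to `[[0,1],[1,0]]`. -/
lemma conj_case1 (b' c h0 : R) (hb : b' * c = 1) (hc : c = 2 * h0 + 1) :
    Conj (M (0:R) b' c) (M 0 1 1) := by
  apply conj_mk (p := b' * (h0 + 1)) (q := b' * h0) (r := h0) (s := h0 + 1)
  · linear_combination hb - b' * hc
  · ring
  · ring
  · linear_combination (h0 + 1) * hb
  · linear_combination h0 * hb
  
/-- `diag(u,-u)` with `u = 1+h` is conjugate to `[[1,2],[h,-1]]`. -/
lemma conj_u_C (h q : R) (F2 : h = 2 * q) (F5 : 2 * h = 0) (F3 : q * h = 0) :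
    Conj (M (1 + h) (0:R) 0) (M 1 2 h) := by
  apply conj_mk (p := (1 + h) * (1 + q)) (q := 1 + h) (r := -q) (s := 1)
  · linear_combination F5 - F2 + 2 * F3
  · linear_combination (1 + h) * F3
  · linear_combination (1 + h) * F2
  · linear_combination F3 - F2
  · linear_combination -F2

lemma conj_C10 (h q : R) (F2 : h = 2 * q) (F5 : 2 * h = 0) :
    Conj (M (1 + h) h (0:R)) (M (1 + h) 0 0) := by
  have hc := conjU (1 + h) h (0:R) q
  have e : M (1 + h - q * 0) (h + 2 * q * (1 + h) - q ^ 2 * 0) (0:R) = M (1 + h) 0 0 :=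
    M_congr (by ring) (by linear_combination (1 + q) * F5 - F2) rfl
  rwa [e] at hc

lemma conj_C01 (h q : R) (F2 : h = 2 * q) (F5 : 2 * h = 0) :
    Conj (M (1 + h) (0:R) h) (M (1 + h) 0 0) := by
  have hc := conjL (1 + h) (0:R) h q
  have e : M (1 + h + q * 0) (0:R) (h - 2 * q * (1 + h) - q ^ 2 * 0) = M (1 + h) 0 0 :=
    M_congr (by ring) rfl (by linear_combination F2 - q * F5)
  rwa [e] at hc

lemma conj_C11 (h q : R) (F2 : h = 2 * q) (F5 : 2 * h = 0) (F3 : q * h = 0) :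
    Conj (M (1 + h) h h) (M (1 + h) 0 h) := by
  have hc := conjU (1 + h) h h q
  have e : M (1 + h - q * h) (h + 2 * q * (1 + h) - q ^ 2 * h) h = M (1 + h) 0 h :=
    M_congr (by linear_combination -F3) (by linear_combination F5 - F2 + 2 * F3 - q * F3) rfl
  rwa [e] at hc

/-- the main reduction for the case `a ≡ 1 mod 4`, `b,c` even. -/
lemma case3core (a2 b1 c1 w z q3 q h : R)
    (hw : 2 * a2 + 4 * a2 ^ 2 + b1 * c1 = q * w)
    (hz : (2 * (a2 + q3 * w) + 1) * z = 1)
    (hq3 : q = 2 * q3) (F2 : h = 2 * q) (F5 : 2 * h = 0) (F3 : q * h = 0) :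
    Conj (M (1 + 4 * a2) (2 * b1) (2 * c1)) (M (1 + h * w) (h * w * b1) (h * w * c1)) := by
  apply conj_mk (p := 1 + 2 * a2) (q := -z * b1) (r := c1) (s := z * (1 + 2 * a2))
  · linear_combination z * hw + hz + w * z * hq3
  · linear_combination (2 + z*h*w) * hw + (-w) * F2 + z*w^2 * F3 + (-(z*w*a2*(1+2*a2)) - a2*w) * F5
  · linear_combination (-(w*b1*(1 + a2)) + w*b1*a2*z) * F5 + (w^2*b1*z) * F3 - (h*w^2*b1*z) * hq3 + (-(h*w*b1)) * hz
  · linear_combination (-(w*c1))*F5 + (w^2*c1*z)*F3 - (h*w^2*c1*z)*hq3 - (h*w*c1)*hz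
  · linear_combination (-2*z - h*w)*hw + (z*w)*F2 + (a2*z*w + a2*(1+2*a2)*w)*F5 + (-(w^2))*F3

/-! ### the 2-power classification -/

lemma case_c_odd {e : ℕ} (he : 0 < e) (a b c c1 : ZMod (2 ^ e))
    (hrel : a ^ 2 + b * c = 1) (hc : c = 2 * c1 + 1) :
    Conj (M a b c) (M 0 1 1) := by
  obtain ⟨ci, hci⟩ := odd_unit he c1
  have hcci : c * ci = 1 := by rw [hc]; exact hci
  set t := (a - 1) * ci with ht
  have s1 := conjU a b c t
  have eq1 : M (a - t * c) (b + 2 * t * a - t ^ 2 * c) c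
      = M 1 (b + 2 * t * a - t ^ 2 * c) c :=
    M_congr (by rw [ht]; linear_combination (1 - a) * hcci) rfl rfl
  rw [eq1] at s1
  have hrel2 := rel_of_conj s1 hrel
  have hB : b + 2 * t * a - t ^ 2 * c = 0 := by
    have hBc : (b + 2 * t * a - t ^ 2 * c) * c = 0 := by linear_combination hrel2
    linear_combination ci * hBc - (b + 2 * t * a - t ^ 2 * c) * hcci
  have eq2 : M (1 : ZMod (2 ^ e)) (b + 2 * t * a - t ^ 2 * c) c = M 1 0 c :=
    M_congr rfl hB rfl
  rw [eq2] at s1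
  have s2 := conjL (1 : ZMod (2 ^ e)) 0 c c1
  have eq3 : M (1 + c1 * 0) (0 : ZMod (2 ^ e)) (c - 2 * c1 * 1 - c1 ^ 2 * 0) = M 1 0 1 :=
    M_congr (by ring) rfl (by linear_combination hc)
  rw [eq3] at s2
  exact (s1.trans s2).trans conj_A_101.symm

lemma case3main {e : ℕ} (he : 0 < e) (a b c a2 b1 c1 : ZMod (2 ^ e))
    (hrel : a ^ 2 + b * c = 1) (ha : a = 4 * a2 + 1) (hb : b = 2 * b1) (hc : c = 2 * c1) :
    Conj (M a b c) (M 1 0 0) ∨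
      (2 ≤ e ∧ Conj (M a b c) (M 1 2 ((2 : ZMod (2 ^ e)) ^ (e - 1)))) := by
  haveI : NeZero (2 ^ e) := ⟨(pow_pos two_pos e).ne'⟩
  have hpow : (2 : ZMod (2 ^ e)) ^ e = 0 := by
    have h0 := ZMod.natCast_self (2 ^ e)
    push_cast at h0
    exact h0
  match e, he with
  | 1, _ =>
    have h2z : (2 : ZMod (2 ^ 1)) = 0 := by rw [← pow_one (2 : ZMod (2 ^ 1))]; exact hpow
    refine Or.inl ?_
    have heq : M a b c = M 1 0 0 :=
      M_congr (by linear_combination ha + 2 * a2 * h2z) (by linear_combination hb + b1 * h2z)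
        (by linear_combination hc + c1 * h2z)
    rw [heq]
    exact Conj.refl _
  | 2, _ =>
    have h4 : (2 : ZMod (2 ^ 2)) ^ 2 = 0 := hpow
    rcases par b1 with ⟨β, hβ⟩ | ⟨β, hβ⟩ <;> rcases par c1 with ⟨γ, hγ⟩ | ⟨γ, hγ⟩
    · -- b = 0, c = 0
      refine Or.inl ?_
      have heq : M a b c = M 1 0 0 :=
        M_congr (by linear_combination ha + a2 * h4) (by linear_combination hb + 2 * hβ + β * h4)
          (by linear_combination hc + 2 * hγ + γ * h4)
      rw [heq]
      exact Conj.refl _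
    · -- b = 0, c = 2
      refine Or.inl ?_
      have heq : M a b c = M 1 0 2 :=
        M_congr (by linear_combination ha + a2 * h4) (by linear_combination hb + 2 * hβ + β * h4)
          (by linear_combination hc + 2 * hγ + γ * h4)
      rw [heq]
      have s := conjL (1 : ZMod (2 ^ 2)) 0 2 1
      have eq2 : M (1 + 1 * 0) (0 : ZMod (2 ^ 2)) (2 - 2 * 1 * 1 - 1 ^ 2 * 0) = M 1 0 0 :=
        M_congr (by ring) rfl (by ring)
      rwa [eq2] at s
    · -- b = 2, c = 0
      refine Or.inl ?_
      have heq : M a b c = M 1 2 0 :=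
        M_congr (by linear_combination ha + a2 * h4) (by linear_combination hb + 2 * hβ + β * h4)
          (by linear_combination hc + 2 * hγ + γ * h4)
      rw [heq]
      have s := conjU (1 : ZMod (2 ^ 2)) 2 0 1
      have eq2 : M (1 - 1 * 0) (2 + 2 * 1 * 1 - 1 ^ 2 * 0) (0 : ZMod (2 ^ 2)) = M 1 0 0 :=
        M_congr (by ring) (by linear_combination h4) rfl
      rwa [eq2] at s
    · -- b = 2, c = 2 : this is C
      refine Or.inr ⟨le_refl 2, ?_⟩
      have heq : M a b c = M 1 2 ((2 : ZMod (2 ^ 2)) ^ (2 - 1)) :=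
        M_congr (by linear_combination ha + a2 * h4) (by linear_combination hb + 2 * hβ + β * h4)
          (by rw [pow_one]; linear_combination hc + 2 * hγ + γ * h4)
      rw [heq]
      exact Conj.refl _
  | (e' + 3), _ =>
    set h : ZMod (2 ^ (e' + 3)) := 2 ^ (e' + 2) with hh
    set q : ZMod (2 ^ (e' + 3)) := 2 ^ (e' + 1) with hq
    set q3 : ZMod (2 ^ (e' + 3)) := 2 ^ e' with hq3'
    have hq3 : q = 2 * q3 := by rw [hq, hq3']; ring
    have F2 : h = 2 * q := by rw [hh, hq]; ring
    have F5 : 2 * h = 0 := by rw [hh]; linear_combination hpow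
    have F3 : q * h = 0 := by
      rw [hh, hq]; linear_combination (2 : ZMod (2 ^ (e' + 3))) ^ e' * hpow
    have hann : 4 * (2 * a2 + 4 * a2 ^ 2 + b1 * c1) = 0 := by
      linear_combination hrel - (4 * a2 + a + 1) * ha - c * hb - 2 * b1 * hc
    obtain ⟨w, hw0⟩ := ann4 (by omega) _ hann
    have hw : 2 * a2 + 4 * a2 ^ 2 + b1 * c1 = q * w := by
      rw [hq]; rw [show e' + 3 - 2 = e' + 1 from rfl] at hw0; exact hw0
    obtain ⟨z, hz⟩ := odd_unit (by omega) (a2 + q3 * w)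
    have main := case3core a2 b1 c1 w z q3 q h hw hz hq3 F2 F5 F3
    have heq : M a b c = M (1 + 4 * a2) (2 * b1) (2 * c1) :=
      M_congr (by linear_combination ha) hb hc
    rw [← heq] at main
    -- now analyze X = M (1 + h*w) (h*w*b1) (h*w*c1)
    rcases par w with ⟨ω, hω⟩ | ⟨ω, hω⟩
    · refine Or.inl ?_
      have heqX : M (1 + h * w) (h * w * b1) (h * w * c1) = M 1 0 0 :=
        M_congr (by linear_combination ω * F5 + h * hω) (by linear_combination (ω * b1) * F5 + h * b1 * hω)
          (by linear_combination (ω * c1) * F5 + h * c1 * hω)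
      rwa [heqX] at main
    · -- w odd : h*w = h
      have hwh : h * w = h := by linear_combination ω * F5 + h * hω
      rcases par b1 with ⟨β, hβ⟩ | ⟨β, hβ⟩ <;> rcases par c1 with ⟨γ, hγ⟩ | ⟨γ, hγ⟩
      · -- (1+h, 0, 0) → C
        refine Or.inr ⟨by omega, ?_⟩
        have heqX : M (1 + h * w) (h * w * b1) (h * w * c1) = M (1 + h) 0 0 :=
          M_congr (by rw [hwh]) (by rw [hwh]; linear_combination β * F5 + h * hβ)
            (by rw [hwh]; linear_combination γ * F5 + h * hγ)
        rw [heqX] at main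
        have final : M (1 : ZMod (2 ^ (e' + 3))) 2 ((2 : ZMod (2 ^ (e' + 3))) ^ (e' + 3 - 1)) = M 1 2 h := by
          rw [hh, show e' + 3 - 1 = e' + 2 from rfl]
        rw [final]
        exact main.trans (conj_u_C h q F2 F5 F3)
      · -- (1+h, 0, h)
        refine Or.inr ⟨by omega, ?_⟩
        have heqX : M (1 + h * w) (h * w * b1) (h * w * c1) = M (1 + h) 0 h :=
          M_congr (by rw [hwh]) (by rw [hwh]; linear_combination β * F5 + h * hβ)
            (by rw [hwh]; linear_combination γ * F5 + h * hγ)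
        rw [heqX] at main
        have final : M (1 : ZMod (2 ^ (e' + 3))) 2 ((2 : ZMod (2 ^ (e' + 3))) ^ (e' + 3 - 1)) = M 1 2 h := by
          rw [hh, show e' + 3 - 1 = e' + 2 from rfl]
        rw [final]
        exact ((main.trans (conj_C01 h q F2 F5)).trans (conj_u_C h q F2 F5 F3))
      · -- (1+h, h, 0)
        refine Or.inr ⟨by omega, ?_⟩
        have heqX : M (1 + h * w) (h * w * b1) (h * w * c1) = M (1 + h) h 0 :=
          M_congr (by rw [hwh]) (by rw [hwh]; linear_combination β * F5 + h * hβ)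
            (by rw [hwh]; linear_combination γ * F5 + h * hγ)
        rw [heqX] at main
        have final : M (1 : ZMod (2 ^ (e' + 3))) 2 ((2 : ZMod (2 ^ (e' + 3))) ^ (e' + 3 - 1)) = M 1 2 h := by
          rw [hh, show e' + 3 - 1 = e' + 2 from rfl]
        rw [final]
        exact ((main.trans (conj_C10 h q F2 F5)).trans (conj_u_C h q F2 F5 F3))
      · -- (1+h, h, h)
        refine Or.inr ⟨by omega, ?_⟩
        have heqX : M (1 + h * w) (h * w * b1) (h * w * c1) = M (1 + h) h h :=
          M_congr (by rw [hwh]) (by rw [hwh]; linear_combination β * F5 + h * hβ)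
            (by rw [hwh]; linear_combination γ * F5 + h * hγ)
        rw [heqX] at main
        have final : M (1 : ZMod (2 ^ (e' + 3))) 2 ((2 : ZMod (2 ^ (e' + 3))) ^ (e' + 3 - 1)) = M 1 2 h := by
          rw [hh, show e' + 3 - 1 = e' + 2 from rfl]
        rw [final]
        exact (((main.trans (conj_C11 h q F2 F5 F3)).trans (conj_C01 h q F2 F5)).trans
          (conj_u_C h q F2 F5 F3))

lemma two_pp {e : ℕ} (he : 0 < e) (a b c : ZMod (2 ^ e)) (hrel : a ^ 2 + b * c = 1) :
    Conj (M a b c) (M 1 0 0) ∨ Conj (M a b c) (M 0 1 1) ∨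
      (2 ≤ e ∧ Conj (M a b c) (M 1 2 ((2 : ZMod (2 ^ e)) ^ (e - 1)))) := by
  haveI : NeZero (2 ^ e) := ⟨(pow_pos two_pos e).ne'⟩
  rcases par c with ⟨c1, hc⟩ | ⟨c1, hc⟩
  · rcases par b with ⟨b1, hb⟩ | ⟨b1, hb⟩
    · -- b, c both even ⇒ a odd
      rcases par a with ⟨y, hay⟩ | ⟨y, hay⟩
      · exfalso
        refine one_ne_even (dvd_pow_self 2 he.ne') (2 * y ^ 2 + 2 * b1 * c1) ?_
        linear_combination -hrel + (a + 2 * y) * hay + c * hb + 2 * b1 * hc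
      · rcases par y with ⟨a2, hy⟩ | ⟨a2, hy⟩
        · rcases case3main he a b c a2 b1 c1 hrel
            (by linear_combination hay + 2 * hy) hb hc with h1 | ⟨h2e, h2⟩
          · exact Or.inl h1
          · exact Or.inr (Or.inr ⟨h2e, h2⟩)
        · -- a ≡ 3 mod 4 : use S
          have hS := conjS a b c
          rcases case3main he (-a) (-c) (-b) (-a2 - 1) (-c1) (-b1)
            (by linear_combination hrel) (by linear_combination -hay - 2 * hy)
            (by linear_combination -hc) (by linear_combination -hb) with h1 | ⟨h2e, h2⟩
          · exact Or.inl (hS.trans h1)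
          · exact Or.inr (Or.inr ⟨h2e, hS.trans h2⟩)
    · -- b odd : use S then c-odd
      have hS := conjS a b c
      have h2 := case_c_odd he (-a) (-c) (-b) (-b1 - 1)
        (by linear_combination hrel) (by linear_combination -hb)
      exact Or.inr (Or.inl (hS.trans h2))
  · exact Or.inr (Or.inl (case_c_odd he a b c c1 hrel hc))

/-! ### CRT gluing -/

lemma Conj.map {S : Type*} [CommRing S] (f : R →+* S)
    {A B : Matrix (Fin 2) (Fin 2) R} (h : Conj A B) :
    Conj (f.mapMatrix A) (f.mapMatrix B) := by
  obtain ⟨P, hP, hAB⟩ := h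
  refine ⟨f.mapMatrix P, ?_, ?_⟩
  · have := (f.map_det P).symm
    rw [hP, map_one] at this
    exact this.symm ▸ rfl
  · rw [← map_mul, ← map_mul, hAB]

lemma M_map {S : Type*} [CommRing S] (f : R →+* S) (a b c : R) :
    f.mapMatrix (M a b c) = M (f a) (f b) (f c) := by
  ext i j
  fin_cases i <;> fin_cases j <;>
    simp [M, RingHom.mapMatrix_apply, Matrix.map_apply, map_neg]

lemma conj_glue {n₁ n₂ : ℕ} (hco : Nat.Coprime n₁ n₂)
    (A B : Matrix (Fin 2) (Fin 2) (ZMod (n₁ * n₂)))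
    (h₁ : Conj (((RingHom.fst (ZMod n₁) (ZMod n₂)).comp
        (ZMod.chineseRemainder hco).toRingHom).mapMatrix A)
      (((RingHom.fst (ZMod n₁) (ZMod n₂)).comp
        (ZMod.chineseRemainder hco).toRingHom).mapMatrix B))
    (h₂ : Conj (((RingHom.snd (ZMod n₁) (ZMod n₂)).comp
        (ZMod.chineseRemainder hco).toRingHom).mapMatrix A)
      (((RingHom.snd (ZMod n₁) (ZMod n₂)).comp
        (ZMod.chineseRemainder hco).toRingHom).mapMatrix B)) :
    Conj A B := by
  set E := ZMod.chineseRemainder hco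
  obtain ⟨P₁, hP₁, h₁⟩ := h₁
  obtain ⟨P₂, hP₂, h₂⟩ := h₂
  set P : Matrix (Fin 2) (Fin 2) (ZMod (n₁ * n₂)) :=
    Matrix.of (fun i j => E.symm (P₁ i j, P₂ i j)) with hPdef
  have key : ∀ i j, E (P i j) = (P₁ i j, P₂ i j) := fun i j => E.apply_symm_apply _
  have hmap1 : ((RingHom.fst (ZMod n₁) (ZMod n₂)).comp E.toRingHom).mapMatrix P = P₁ := by
    ext i j
    simp only [RingHom.mapMatrix_apply, Matrix.map_apply, RingHom.comp_apply]
    rw [show (E.toRingHom (P i j)) = E (P i j) from rfl, key i j]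
    rfl
  have hmap2 : ((RingHom.snd (ZMod n₁) (ZMod n₂)).comp E.toRingHom).mapMatrix P = P₂ := by
    ext i j
    simp only [RingHom.mapMatrix_apply, Matrix.map_apply, RingHom.comp_apply]
    rw [show (E.toRingHom (P i j)) = E (P i j) from rfl, key i j]
    rfl
  refine ⟨P, ?_, ?_⟩
  · apply E.injective
    rw [map_one]
    apply Prod.ext
    · have : (E P.det).1 = ((RingHom.fst (ZMod n₁) (ZMod n₂)).comp E.toRingHom) P.det := rfl
      rw [this, RingHom.map_det, hmap1, hP₁]; rfl
    · have : (E P.det).2 = ((RingHom.snd (ZMod n₁) (ZMod n₂)).comp E.toRingHom) P.det := rfl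
      rw [this, RingHom.map_det, hmap2, hP₂]; rfl
  · ext i j
    apply E.injective
    apply Prod.ext
    · have l : ∀ (X : Matrix (Fin 2) (Fin 2) (ZMod (n₁ * n₂))), (E (X i j)).1
          = (((RingHom.fst (ZMod n₁) (ZMod n₂)).comp E.toRingHom).mapMatrix X) i j := fun _ => rfl
      rw [l, l, map_mul, map_mul, hmap1, h₁]
    · have l : ∀ (X : Matrix (Fin 2) (Fin 2) (ZMod (n₁ * n₂))), (E (X i j)).2
          = (((RingHom.snd (ZMod n₁) (ZMod n₂)).comp E.toRingHom).mapMatrix X) i j := fun _ => rfl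
      rw [l, l, map_mul, map_mul, hmap2, h₂]

/-! ### the classification predicate and induction -/

def Phi (n : ℕ) : Prop :=
  ∀ a b c : ZMod n, a ^ 2 + b * c = 1 →
    Conj (M a b c) (M 1 0 0) ∨ (2 ∣ n ∧ Conj (M a b c) (M 0 1 1)) ∨
      (4 ∣ n ∧ Conj (M a b c) (M 1 2 ((n / 2 : ℕ) : ZMod n)))

lemma phi_pp (p e : ℕ) (hp : Nat.Prime p) (he : 0 < e) : Phi (p ^ e) := by
  intro a b c hrel
  by_cases hp2 : p = 2
  · subst hp2
    rcases two_pp he a b c hrel with h | h | ⟨he2, h⟩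
    · exact Or.inl h
    · exact Or.inr (Or.inl ⟨dvd_pow_self 2 he.ne', h⟩)
    · refine Or.inr (Or.inr ⟨?_, ?_⟩)
      · have : (2:ℕ) ^ 2 ∣ 2 ^ e := pow_dvd_pow 2 he2
        norm_num at this
        exact this
      · have hcast : (((2 ^ e / 2 : ℕ)) : ZMod (2 ^ e)) = (2 : ZMod (2 ^ e)) ^ (e - 1) := by
          obtain ⟨e'', rfl⟩ : ∃ e'', e = e'' + 1 := ⟨e - 1, by omega⟩
          rw [pow_succ, Nat.mul_div_cancel _ (by norm_num)]
          push_cast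
          simp
        rw [show M (1 : ZMod (2^e)) 2 ((2 ^ e / 2 : ℕ) : ZMod (2 ^ e))
            = M 1 2 ((2 : ZMod (2 ^ e)) ^ (e - 1)) from M_congr rfl rfl hcast]
        exact h
  · exact Or.inl (odd_pp hp hp2 he a b c hrel)

lemma phi_one : Phi 1 := by
  intro a b c _
  refine Or.inl ?_
  have heq : M a b c = M 1 0 0 := by
    ext i j
    exact Subsingleton.elim _ _
  rw [heq]
  exact Conj.refl _

lemma phi_mul_odd (n₁ n₂ : ℕ) (hco : n₁.Coprime n₂) (hodd : ¬ 2 ∣ n₂)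
    (H1 : Phi n₁) (H2 : Phi n₂) : Phi (n₁ * n₂) := by
  intro a b c hrel
  set f₁ := (RingHom.fst (ZMod n₁) (ZMod n₂)).comp (ZMod.chineseRemainder hco).toRingHom with hf₁
  set f₂ := (RingHom.snd (ZMod n₁) (ZMod n₂)).comp (ZMod.chineseRemainder hco).toRingHom with hf₂
  have hrel1 : (f₁ a) ^ 2 + f₁ b * f₁ c = 1 := by
    have h := congrArg f₁ hrel
    rw [map_add, map_pow, map_mul, map_one] at h
    exact h
  have hrel2 : (f₂ a) ^ 2 + f₂ b * f₂ c = 1 := by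
    have h := congrArg f₂ hrel
    rw [map_add, map_pow, map_mul, map_one] at h
    exact h
  have hodd' : Odd n₂ := Nat.odd_iff.mpr (by omega)
  have c2 : Conj (M (f₂ a) (f₂ b) (f₂ c)) (M 1 0 0) := by
    rcases H2 (f₂ a) (f₂ b) (f₂ c) hrel2 with h | ⟨hd, _⟩ | ⟨hd, _⟩
    · exact h
    · exact absurd hd hodd
    · exact absurd (dvd_trans (by norm_num : (2:ℕ) ∣ 4) hd) hodd
  rcases H1 (f₁ a) (f₁ b) (f₁ c) hrel1 with c1 | ⟨hd2, c1⟩ | ⟨hd4, c1⟩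
  · refine Or.inl (conj_glue hco _ _ ?_ ?_)
    · rw [M_map, M_map]
      simp only [map_one, map_zero]
      exact c1
    · rw [M_map, M_map]
      simp only [map_one, map_zero]
      exact c2
  · refine Or.inr (Or.inl ⟨Dvd.dvd.mul_right hd2 n₂, conj_glue hco _ _ ?_ ?_⟩)
    · rw [M_map, M_map]
      simp only [map_one, map_zero]
      exact c1
    · rw [M_map, M_map]
      simp only [map_one, map_zero]
      have hu : IsUnit (2 : ZMod n₂) := by
        have h2 : IsUnit ((2 : ℕ) : ZMod n₂) := by
          rw [ZMod.isUnit_iff_coprime]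
          exact Nat.coprime_two_left.mpr hodd'
        exact_mod_cast h2
      obtain ⟨i2, hi2⟩ := hu.exists_right_inv
      exact c2.trans (conj_A_D i2 hi2).symm
  · refine Or.inr (Or.inr ⟨Dvd.dvd.mul_right hd4 n₂, conj_glue hco _ _ ?_ ?_⟩)
    · rw [M_map, M_map]
      simp only [map_one, map_zero, map_ofNat, map_natCast]
      have h2n1 : 2 ∣ n₁ := dvd_trans (by norm_num) hd4
      obtain ⟨m₁, rfl⟩ := h2n1
      obtain ⟨k, hk⟩ := hodd'
      have hdiv : 2 * m₁ * n₂ / 2 = m₁ * n₂ := by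
        rw [mul_assoc, Nat.mul_div_cancel_left _ (by norm_num)]
      have hdiv2 : 2 * m₁ / 2 = m₁ := Nat.mul_div_cancel_left _ (by norm_num)
      have hcast : ((2 * m₁ * n₂ / 2 : ℕ) : ZMod (2 * m₁)) = ((2 * m₁ / 2 : ℕ) : ZMod (2 * m₁)) := by
        rw [hdiv, hdiv2, hk]
        have : m₁ * (2 * k + 1) = 2 * m₁ * k + m₁ := by ring
        rw [this]
        push_cast
        rw [show ((2 : ZMod (2 * m₁)) * (m₁ : ZMod (2 * m₁)) * (k : ZMod (2 * m₁)))
            = (((2 * m₁ : ℕ) : ZMod (2 * m₁))) * (k : ZMod (2 * m₁)) by push_cast; ring]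
        rw [ZMod.natCast_self, zero_mul, zero_add]
      rw [show M (1 : ZMod (2 * m₁)) 2 ((2 * m₁ * n₂ / 2 : ℕ) : ZMod (2 * m₁))
          = M 1 2 ((2 * m₁ / 2 : ℕ) : ZMod (2 * m₁)) from M_congr rfl rfl hcast]
      exact c1
    · rw [M_map, M_map]
      simp only [map_one, map_zero, map_ofNat, map_natCast]
      have h2n1 : 2 ∣ n₁ := dvd_trans (by norm_num) hd4
      obtain ⟨m₁, rfl⟩ := h2n1
      have hcast : ((2 * m₁ * n₂ / 2 : ℕ) : ZMod n₂) = 0 := by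
        rw [mul_assoc, Nat.mul_div_cancel_left _ (by norm_num)]
        rw [ZMod.natCast_eq_zero_iff]
        exact ⟨m₁, (mul_comm m₁ n₂)⟩
      rw [show M (1 : ZMod n₂) 2 ((2 * m₁ * n₂ / 2 : ℕ) : ZMod n₂) = M 1 2 0 from
        M_congr rfl rfl hcast]
      exact c2.trans conj_C0_D.symm

lemma phi_mul (n₁ n₂ : ℕ) (hco : n₁.Coprime n₂) (H1 : Phi n₁) (H2 : Phi n₂) :
    Phi (n₁ * n₂) := by
  by_cases hodd : 2 ∣ n₂
  · have hodd1 : ¬ 2 ∣ n₁ := by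
      intro h
      have := Nat.dvd_gcd h hodd
      rw [hco] at this
      omega
    rw [Nat.mul_comm]
    exact phi_mul_odd n₂ n₁ hco.symm hodd1 H2 H1
  · exact phi_mul_odd n₁ n₂ hco hodd H1 H2

lemma phi_all (n : ℕ) : 0 < n → Phi n := by
  induction n using Nat.recOnPosPrimePosCoprime with
  | prime_pow p e pp he => exact fun _ => phi_pp p e pp he
  | zero => exact fun h => absurd h (by omega)
  | one => exact fun _ => phi_one
  | coprime a b ha hb hco Ha Hb =>
      exact fun _ => phi_mul a b hco (Ha (by omega)) (Hb (by omega))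

lemma conj_to_inv {A B : Matrix (Fin 2) (Fin 2) R} (h : Conj A B) :
    ∃ P : Matrix (Fin 2) (Fin 2) R, P.det = 1 ∧ P⁻¹ * A * P = B := by
  obtain ⟨P, hP, hAB⟩ := h
  have hu : IsUnit P.det := by rw [hP]; exact isUnit_one
  refine ⟨P, hP, ?_⟩
  rw [mul_assoc, hAB, ← mul_assoc, Matrix.nonsing_inv_mul _ hu, one_mul]

end Stmt8

/-- Every `τ ∈ GL₂(ℤ/n)` with `det τ = -1` and `tr τ = 0` is conjugate
by an element of `SL₂(ℤ/n)` to `diag(1,-1)`, or (if `n` is even) to `[[0,1],[1,0]]`,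
or (if `4 ∣ n`) to `[[1,2],[n/2,-1]]`. -/
theorem stmt8 (n : ℕ) (hn : 0 < n) (τ : Matrix (Fin 2) (Fin 2) (ZMod n))
    (hdet : τ.det = -1) (htr : τ.trace = 0) :
    ∃ P : Matrix (Fin 2) (Fin 2) (ZMod n), P.det = 1 ∧
      (P⁻¹ * τ * P = !![1, 0; 0, -1] ∨
       (2 ∣ n ∧ P⁻¹ * τ * P = !![0, 1; 1, 0]) ∨
       (4 ∣ n ∧ P⁻¹ * τ * P = !![1, 2; ((n / 2 : ℕ) : ZMod n), -1])) := by
  set a := τ 0 0 with ha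
  set b := τ 0 1 with hb
  set c := τ 1 0 with hc
  have h11 : τ 1 1 = -a := by
    rw [Matrix.trace_fin_two] at htr
    linear_combination htr
  have hτ : τ = Stmt8.M a b c := by
    ext i j
    fin_cases i <;> fin_cases j <;>
      simp only [Stmt8.M, Matrix.cons_val', Matrix.cons_val_zero, Matrix.cons_val_one,
        Matrix.head_cons, Matrix.head_fin_const, Matrix.empty_val', Matrix.cons_val_fin_one,
        Matrix.of_apply, Fin.isValue]
    · rfl
    · rfl
    · rfl
    · exact h11
  have hrel : a ^ 2 + b * c = 1 := by
    rw [Matrix.det_fin_two, h11] at hdet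
    linear_combination -hdet
  have T1 : Stmt8.M (1 : ZMod n) 0 0 = !![1, 0; 0, -1] := by
    ext i j; fin_cases i <;> fin_cases j <;> simp [Stmt8.M]
  have T2 : Stmt8.M (0 : ZMod n) 1 1 = !![0, 1; 1, 0] := by
    ext i j; fin_cases i <;> fin_cases j <;> simp [Stmt8.M]
  have T3 : Stmt8.M (1 : ZMod n) 2 ((n / 2 : ℕ) : ZMod n) = !![1, 2; ((n / 2 : ℕ) : ZMod n), -1] := by
    ext i j; fin_cases i <;> fin_cases j <;> simp [Stmt8.M]
  rcases Stmt8.phi_all n hn a b c hrel with h | ⟨hd, h⟩ | ⟨hd, h⟩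
  · obtain ⟨P, hP, hinv⟩ := Stmt8.conj_to_inv h
    exact ⟨P, hP, Or.inl (by rw [hτ, hinv, T1])⟩
  · obtain ⟨P, hP, hinv⟩ := Stmt8.conj_to_inv h
    exact ⟨P, hP, Or.inr (Or.inl ⟨hd, by rw [hτ, hinv, T2]⟩)⟩
  · obtain ⟨P, hP, hinv⟩ := Stmt8.conj_to_inv h
    exact ⟨P, hP, Or.inr (Or.inr ⟨hd, by rw [hτ, hinv, T3]⟩)⟩
end

section
/- Let p be an odd prime and i ≥ 1. Every matrix τ ∈ GL₂(Z/p^i) with det τ = -1 and tr τ = 0 is conjugate by an element of SL₂(Z/p^i) to diag(1,-1). -/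
/-- For `p` an odd prime and `i ≥ 1`, every `τ ∈ GL₂(ℤ/p^i)` with
`det τ = -1` and `tr τ = 0` is conjugate by an element of `SL₂(ℤ/p^i)` to `diag(1,-1)`. -/
theorem stmt10 (p : ℕ) (hp : p.Prime) (hodd : p ≠ 2) (i : ℕ) (hi : 1 ≤ i)
    (τ : Matrix (Fin 2) (Fin 2) (ZMod (p ^ i)))
    (hdet : τ.det = -1) (htr : τ.trace = 0) :
    ∃ P : Matrix (Fin 2) (Fin 2) (ZMod (p ^ i)), P.det = 1 ∧
      P⁻¹ * τ * P = !![1, 0; 0, -1] := by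
  haveI : NeZero (p ^ i) := ⟨pow_ne_zero i hp.ne_zero⟩
  set a := τ 0 0 with ha
  set b := τ 0 1 with hb
  set c := τ 1 0 with hc
  rw [Matrix.trace_fin_two] at htr
  have hd : τ 1 1 = -a := by linear_combination htr
  rw [Matrix.det_fin_two, hd] at hdet
  have habc : a * a + b * c = 1 := by linear_combination -hdet
  have hτ : τ = !![a, b; c, -a] := by
    rw [← hd]; exact Matrix.etaExpand_eq τ ▸ rfl
  -- nonunit implies p divides val
  have keyd : ∀ x : ZMod (p ^ i), ¬ IsUnit x → ((x.val : ZMod p)) = 0 := by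
    intro x hx
    have h1 : ¬ Nat.Coprime x.val (p ^ i) := by
      intro h
      exact hx (by simpa [ZMod.natCast_val, ZMod.cast_id] using
        (ZMod.isUnit_iff_coprime x.val (p ^ i)).mpr h)
    have h2 : p ∣ x.val := by
      by_contra hnd
      exact h1 (Nat.Coprime.pow_right i ((hp.coprime_iff_not_dvd).mpr hnd).symm)
    exact (ZMod.natCast_eq_zero_iff _ _).mpr h2
  have h2u : IsUnit (2 : ZMod (p ^ i)) := by
    have : Nat.Coprime 2 (p ^ i) :=
      Nat.Coprime.pow_right i ((Nat.coprime_primes Nat.prime_two hp).mpr (Ne.symm hodd))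
    simpa using (ZMod.isUnit_iff_coprime 2 (p ^ i)).mpr this
  have key : IsUnit (a + 1) ∨ IsUnit (a - 1) := by
    by_contra h
    push_neg at h
    have e1 := keyd _ h.1
    have e2 := keyd _ h.2
    have c1 : (ZMod.castHom (dvd_pow_self p (by omega)) (ZMod p)) (a + 1) = 0 := by
      rw [ZMod.castHom_apply, ← ZMod.natCast_val]; exact e1
    have c2 : (ZMod.castHom (dvd_pow_self p (by omega)) (ZMod p)) (a - 1) = 0 := by
      rw [ZMod.castHom_apply, ← ZMod.natCast_val]; exact e2
    have : (2 : ZMod p) = 0 := by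
      rw [map_add, map_one] at c1
      rw [map_sub, map_one] at c2
      linear_combination c1 - c2
    have : (p : ℕ) ∣ 2 := by
      have h2 : ((2 : ℕ) : ZMod p) = 0 := by exact_mod_cast this
      exact (ZMod.natCast_eq_zero_iff 2 p).mp h2
    exact hodd ((Nat.prime_dvd_prime_iff_eq hp Nat.prime_two).mp this)
  rcases key with hu | hu
  · -- a+1 unit
    have hδ : IsUnit (-2 * (a + 1) : ZMod (p ^ i)) := (h2u.neg).mul hu
    obtain ⟨w, hw⟩ := hδ
    set e : ZMod (p ^ i) := ↑w⁻¹ with he'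
    have he : (-2 * (a + 1)) * e = 1 := by rw [← hw, he']; exact_mod_cast w.mul_inv
    refine ⟨!![(a + 1) * e, b; c * e, -(1 + a)], ?_, ?_⟩
    · rw [Matrix.det_fin_two_of]
      linear_combination (-e) * habc + he
    · have hPd : IsUnit (!![(a + 1) * e, b; c * e, -(1 + a)]).det := by
        rw [Matrix.det_fin_two_of]
        exact IsUnit.of_mul_eq_one 1 (by linear_combination (-e) * habc + he)
      have hcomm : τ * !![(a + 1) * e, b; c * e, -(1 + a)]
          = !![(a + 1) * e, b; c * e, -(1 + a)] * !![1, 0; 0, -1] := by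
        rw [hτ]
        ext j k
        fin_cases j <;> fin_cases k <;>
          simp [Matrix.mul_apply, Fin.sum_univ_two] <;>
          first
            | ring1
            | linear_combination e * habc
            | linear_combination habc
      rw [mul_assoc, hcomm, ← mul_assoc, Matrix.nonsing_inv_mul _ hPd, one_mul]
  · -- a-1 unit
    have hδ : IsUnit (-2 * (a - 1) : ZMod (p ^ i)) := (h2u.neg).mul hu
    obtain ⟨w, hw⟩ := hδ
    set e : ZMod (p ^ i) := ↑w⁻¹ with he'
    have he : (-2 * (a - 1)) * e = 1 := by rw [← hw, he']; exact_mod_cast w.mul_inv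
    refine ⟨!![b * e, a - 1; (1 - a) * e, c], ?_, ?_⟩
    · rw [Matrix.det_fin_two_of]
      linear_combination e * habc + he
    · have hPd : IsUnit (!![b * e, a - 1; (1 - a) * e, c]).det := by
        rw [Matrix.det_fin_two_of]
        exact IsUnit.of_mul_eq_one 1 (by linear_combination e * habc + he)
      have hcomm : τ * !![b * e, a - 1; (1 - a) * e, c]
          = !![b * e, a - 1; (1 - a) * e, c] * !![1, 0; 0, -1] := by
        rw [hτ]
        ext j k
        fin_cases j <;> fin_cases k <;>
          simp [Matrix.mul_apply, Fin.sum_univ_two] <;>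
          first
            | ring1
            | linear_combination e * habc
            | linear_combination habc
      rw [mul_assoc, hcomm, ← mul_assoc, Matrix.nonsing_inv_mul _ hPd, one_mul]
end

section
/- Let F be an algebraically closed field, T = (Z/n)², ε a primitive n-th root of unity with char F ∤ n, and D the algebra generated by elements X_a, X_b subject to X_a^n = X_b^n = 1 and X_a X_b = ε X_b X_a (the Pauli algebra). Let τ ∈ GL₂(Z/n) and λ_a, λ_b ∈ F^×. If the assignment X_a ↦ λ_a X_{τ(a)}, X_b ↦ λ_b X_{τ(b)} extends to an anti-automorphism ψ of D (where X_g for g = αa+βb denotes the corresponding basis monomial and the grading is by T), then det τ = -1. -/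
/-- Let `D = F^σ T` be the Pauli (twisted group) algebra on
`T = (ℤ/n)²`, with basis `X_t` and `X_u · X_v = ε^{-u₁·v₀} • X_{u+v}`. If the assignment
`X_a ↦ λ_a X_{τ(a)}`, `X_b ↦ λ_b X_{τ(b)}` (for `τ ∈ GL₂(ℤ/n)`, `λ_a, λ_b ∈ F^×`)
extends to an anti-automorphism `ψ` of `D`, then `det τ = -1`. -/
theorem stmt12 {F : Type*} [Field F] [IsAlgClosed F] (n : ℕ) [NeZero n]
    (hchar : (n : F) ≠ 0) (ε : F) (hε : IsPrimitiveRoot ε n)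
    {D : Type*} [Ring D] [Algebra F D]
    (X : Module.Basis (Fin 2 → ZMod n) F D)
    (hmul : ∀ u v : Fin 2 → ZMod n,
      (X u : D) * X v = (ε ^ ((u 1).val * (v 0).val))⁻¹ • X (u + v))
    (τ : Matrix (Fin 2) (Fin 2) (ZMod n)) (hτ : IsUnit τ.det)
    (lamA lamB : F) (ha : lamA ≠ 0) (hb : lamB ≠ 0)
    (ψ : D →ₗ[F] D) (hbij : Function.Bijective ψ)
    (hanti : ∀ x y : D, ψ (x * y) = ψ y * ψ x)
    (hψa : ψ (X ![1, 0]) = lamA • X (τ.mulVec ![1, 0]))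
    (hψb : ψ (X ![0, 1]) = lamB • X (τ.mulVec ![0, 1])) :
    τ.det = -1 := by
  have hε0 : ε ≠ 0 := hε.ne_zero (NeZero.ne n)
  set a : Fin 2 → ZMod n := ![1, 0] with ha_def
  set b : Fin 2 → ZMod n := ![0, 1] with hb_def
  set ta : Fin 2 → ZMod n := τ.mulVec a with hta_def
  set tb : Fin 2 → ZMod n := τ.mulVec b with htb_def
  set k : ℕ := (1 : ZMod n).val with hk_def
  set p : ℕ := (tb 1).val * (ta 0).val with hp_def
  set q : ℕ := (ta 1).val * (tb 0).val with hq_def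
  -- X a * X b = X (a + b)
  have h1 : (X a : D) * X b = X (a + b) := by
    have := hmul a b
    simpa [ha_def, hb_def] using this
  -- X b * X a
  have h2 : (X b : D) * X a = (ε ^ (k * k))⁻¹ • X (a + b) := by
    have := hmul b a
    rw [add_comm b a] at this
    simpa [ha_def, hb_def, hk_def] using this
  have hεk : (ε ^ (k * k)) ≠ 0 := pow_ne_zero _ hε0
  have h3 : (X a : D) * X b = ε ^ (k * k) • ((X b : D) * X a) := by
    rw [h2, h1, smul_inv_smul₀ hεk]
  -- apply ψ
  have h4 : ψ (X b) * ψ (X a) = ε ^ (k * k) • (ψ (X a) * ψ (X b)) := by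
    rw [← hanti, h3, map_smul, hanti]
  rw [hψa, hψb] at h4
  have h5 : (lamB * (lamA * (ε ^ p)⁻¹)) • (X (ta + tb) : D)
      = (ε ^ (k * k) * (lamA * (lamB * (ε ^ q)⁻¹))) • (X (ta + tb) : D) := by
    have hab : (X tb : D) * X ta = (ε ^ p)⁻¹ • X (ta + tb) := by
      rw [hmul tb ta, add_comm tb ta]
    have hba : (X ta : D) * X tb = (ε ^ q)⁻¹ • X (ta + tb) := hmul ta tb
    calc (lamB * (lamA * (ε ^ p)⁻¹)) • (X (ta + tb) : D)
        = lamB • X tb * lamA • X ta := by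
          rw [smul_mul_assoc, mul_smul_comm, hab, ← smul_assoc, ← smul_assoc]
          simp [mul_assoc, smul_smul]
      _ = ε ^ (k * k) • (lamA • X ta * lamB • X tb) := h4
      _ = (ε ^ (k * k) * (lamA * (lamB * (ε ^ q)⁻¹))) • (X (ta + tb) : D) := by
          rw [smul_mul_assoc, mul_smul_comm, hba, ← smul_assoc, ← smul_assoc, ← smul_assoc]
          simp [mul_assoc, smul_smul]
  have key : lamB * (lamA * (ε ^ p)⁻¹) = ε ^ (k * k) * (lamA * (lamB * (ε ^ q)⁻¹)) := by
    have := congrArg (fun z => X.repr z (ta + tb)) h5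
    simpa using this
  have hεp : (ε ^ p) ≠ 0 := pow_ne_zero _ hε0
  have hεq : (ε ^ q) ≠ 0 := pow_ne_zero _ hε0
  have hexp : ε ^ q = ε ^ (k * k + p) := by
    rw [pow_add]
    field_simp at key
    apply mul_left_cancel₀ (mul_ne_zero hb ha)
    linear_combination (lamB * lamA) * key
  -- lift to units and use modular arithmetic
  have hu := hε.isUnit (NeZero.ne n)
  have hεu : IsPrimitiveRoot hu.unit n := hε.isUnit_unit (NeZero.ne n)
  have huq : hu.unit ^ q = hu.unit ^ (k * k + p) := by
    ext
    simpa using hexp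
  have hmod : q ≡ k * k + p [MOD n] := by
    have := pow_eq_pow_iff_modEq.mp huq
    rwa [← hεu.eq_orderOf] at this
  have hcast : (q : ZMod n) = ((k * k + p : ℕ) : ZMod n) :=
    (ZMod.natCast_eq_natCast_iff _ _ _).mpr hmod
  have hta : ∀ i, ta i = τ i 0 := by
    intro i
    simp [hta_def, ha_def, Matrix.mulVec, dotProduct, Fin.sum_univ_two]
    fin_cases i <;> simp
  have htb : ∀ i, tb i = τ i 1 := by
    intro i
    simp [htb_def, hb_def, Matrix.mulVec, dotProduct, Fin.sum_univ_two]
    fin_cases i <;> simp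
  have hfinal : τ 1 0 * τ 0 1 = 1 + τ 1 1 * τ 0 0 := by
    have h := hcast
    push_cast at h
    rw [hq_def, hp_def, hk_def] at h
    push_cast [ZMod.natCast_val, ZMod.cast_id] at h
    rw [hta, hta, htb, htb] at h
    simpa [one_mul] using h
  rw [Matrix.det_fin_two]
  linear_combination -hfinal
end

section
/- Let F be an algebraically closed field, T = (Z/n)² with generators a, b, and D = F^σ T the twisted group algebra with X_a X_b = ε X_b X_a, X_a^n = X_b^n = 1, where ε is a primitive n-th root of unity. Let τ ∈ GL₂(Z/n) with det τ = -1, and λ_a, λ_b ∈ F^× with λ_a^n = σ(τ(a),τ(a))^{-n(n-1)/2} and λ_b^n = σ(τ(b),τ(b))^{-n(n-1)/2}. Then the assignment X_a ↦ λ_a X_{τ(a)}, X_b ↦ λ_b X_{τ(b)} extends to a τ-homogeneous anti-automorphism of D. -/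
private def sc (i : ℕ) : ℕ := ∑ x ∈ Finset.range i, x

private lemma sc_add (i k : ℕ) : sc (i + k) = sc i + sc k + i * k := by
  induction k with
  | zero => simp [sc]
  | succ k ih =>
    have : i + (k+1) = (i+k) + 1 := by omega
    rw [this, sc, Finset.sum_range_succ, ← sc, ih]
    have h2 : sc (k+1) = sc k + k := by rw [sc, Finset.sum_range_succ, ← sc]
    rw [h2]; ring

private noncomputable def ee {F : Type*} [Field F] (n : ℕ) (ε : F) (x : ZMod n) : F :=
  ε ^ x.val

private lemma ee_natCast {F : Type*} [Field F] (n : ℕ) [NeZero n] (ε : F)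
    (h1 : ε ^ n = 1) (m : ℕ) : ee n ε (m : ZMod n) = ε ^ m := by
  rw [ee, ZMod.val_natCast, ← pow_eq_pow_mod m h1]

private lemma ee_add {F : Type*} [Field F] (n : ℕ) [NeZero n] (ε : F)
    (h1 : ε ^ n = 1) (x y : ZMod n) : ee n ε (x + y) = ee n ε x * ee n ε y := by
  rw [ee, ZMod.val_add, ← pow_eq_pow_mod _ h1, pow_add, ee, ee]

private lemma ee_zero {F : Type*} [Field F] (n : ℕ) [NeZero n] (ε : F) :
    ee n ε 0 = 1 := by
  rw [ee, ZMod.val_zero, pow_zero]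

private lemma ee_ne_zero {F : Type*} [Field F] (n : ℕ) (ε : F) (hε : ε ≠ 0) (x : ZMod n) :
    ee n ε x ≠ 0 := pow_ne_zero _ hε

private lemma ee_neg {F : Type*} [Field F] (n : ℕ) [NeZero n] (ε : F)
    (h1 : ε ^ n = 1) (x : ZMod n) : ee n ε (-x) = (ee n ε x)⁻¹ := by
  have := ee_add n ε h1 x (-x)
  rw [add_neg_cancel, ee_zero] at this
  exact eq_inv_of_mul_eq_one_right this.symm

private noncomputable def ctil {F : Type*} [Field F] (n : ℕ) (ε lamA lamB : F)
    (α β γ : ZMod n) (i j : ℕ) : F :=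
  lamA ^ i * lamB ^ j * ee n ε (α * (sc i : ℕ) + β * (sc j : ℕ) + γ * (i * j : ℕ))

private lemma ctil_add {F : Type*} [Field F] (n : ℕ) [NeZero n] (ε lamA lamB : F)
    (h1 : ε ^ n = 1) (α β γ : ZMod n) (i j k l : ℕ) :
    ctil n ε lamA lamB α β γ (i + k) (j + l) =
      ctil n ε lamA lamB α β γ i j * ctil n ε lamA lamB α β γ k l *
        ee n ε (α * (i * k : ℕ) + β * (j * l : ℕ) + γ * ((i * l : ℕ) + (j * k : ℕ))) := by
  unfold ctil
  have hexp : (α * (sc (i+k) : ℕ) + β * (sc (j+l) : ℕ) + γ * ((i+k) * (j+l) : ℕ) : ZMod n)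
      = (α * (sc i : ℕ) + β * (sc j : ℕ) + γ * (i * j : ℕ))
        + ((α * (sc k : ℕ) + β * (sc l : ℕ) + γ * (k * l : ℕ))
        + (α * (i * k : ℕ) + β * (j * l : ℕ) + γ * ((i * l : ℕ) + (j * k : ℕ)))) := by
    rw [sc_add i k, sc_add j l]
    push_cast
    ring
  rw [hexp, ee_add n ε h1 (α * (sc i : ℕ) + β * (sc j : ℕ) + γ * (i * j : ℕ)),
    ee_add n ε h1 (α * (sc k : ℕ) + β * (sc l : ℕ) + γ * (k * l : ℕ)), pow_add, pow_add]
  ring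

private lemma ctil_perA {F : Type*} [Field F] (n : ℕ) [NeZero n] (ε lamA lamB : F)
    (h1 : ε ^ n = 1) (α β γ : ZMod n)
    (hla : lamA ^ n * ee n ε (α * (sc n : ℕ)) = 1) (i j : ℕ) :
    ctil n ε lamA lamB α β γ (i + n) j = ctil n ε lamA lamB α β γ i j := by
  unfold ctil
  have hexp : (α * (sc (i+n) : ℕ) + β * (sc j : ℕ) + γ * ((i+n) * j : ℕ) : ZMod n)
      = (α * (sc i : ℕ) + β * (sc j : ℕ) + γ * (i * j : ℕ)) + α * (sc n : ℕ) := by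
    rw [sc_add i n]
    push_cast [ZMod.natCast_self]
    ring
  rw [hexp, ee_add n ε h1, pow_add]
  calc lamA ^ i * lamA ^ n * lamB ^ j *
        (ee n ε (α * (sc i : ℕ) + β * (sc j : ℕ) + γ * (i * j : ℕ)) * ee n ε (α * (sc n : ℕ)))
      = lamA ^ i * lamB ^ j * ee n ε (α * (sc i : ℕ) + β * (sc j : ℕ) + γ * (i * j : ℕ))
        * (lamA ^ n * ee n ε (α * (sc n : ℕ))) := by ring
    _ = _ := by rw [hla, mul_one]

private lemma ctil_perB {F : Type*} [Field F] (n : ℕ) [NeZero n] (ε lamA lamB : F)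
    (h1 : ε ^ n = 1) (α β γ : ZMod n)
    (hlb : lamB ^ n * ee n ε (β * (sc n : ℕ)) = 1) (i j : ℕ) :
    ctil n ε lamA lamB α β γ i (j + n) = ctil n ε lamA lamB α β γ i j := by
  unfold ctil
  have hexp : (α * (sc i : ℕ) + β * (sc (j+n) : ℕ) + γ * ((i * (j+n) : ℕ)) : ZMod n)
      = (α * (sc i : ℕ) + β * (sc j : ℕ) + γ * (i * j : ℕ)) + β * (sc n : ℕ) := by
    rw [sc_add j n]
    push_cast [ZMod.natCast_self]
    ring
  rw [hexp, ee_add n ε h1, pow_add]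
  calc lamA ^ i * (lamB ^ j * lamB ^ n) *
        (ee n ε (α * (sc i : ℕ) + β * (sc j : ℕ) + γ * (i * j : ℕ)) * ee n ε (β * (sc n : ℕ)))
      = lamA ^ i * lamB ^ j * ee n ε (α * (sc i : ℕ) + β * (sc j : ℕ) + γ * (i * j : ℕ))
        * (lamB ^ n * ee n ε (β * (sc n : ℕ))) := by ring
    _ = _ := by rw [hlb, mul_one]

private lemma ctil_mod {F : Type*} [Field F] (n : ℕ) [NeZero n] (ε lamA lamB : F)
    (h1 : ε ^ n = 1) (α β γ : ZMod n)
    (hla : lamA ^ n * ee n ε (α * (sc n : ℕ)) = 1)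
    (hlb : lamB ^ n * ee n ε (β * (sc n : ℕ)) = 1) (i j : ℕ) :
    ctil n ε lamA lamB α β γ i j = ctil n ε lamA lamB α β γ (i % n) (j % n) := by
  have hA : ∀ m i j, ctil n ε lamA lamB α β γ (i + n * m) j = ctil n ε lamA lamB α β γ i j := by
    intro m
    induction m with
    | zero => simp
    | succ m ih =>
      intro i j
      have : i + n * (m + 1) = (i + n * m) + n := by ring
      rw [this, ctil_perA n ε lamA lamB h1 α β γ hla, ih]
  have hB : ∀ m i j, ctil n ε lamA lamB α β γ i (j + n * m) = ctil n ε lamA lamB α β γ i j := by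
    intro m
    induction m with
    | zero => simp
    | succ m ih =>
      intro i j
      have : j + n * (m + 1) = (j + n * m) + n := by ring
      rw [this, ctil_perB n ε lamA lamB h1 α β γ hlb, ih]
  conv_lhs => rw [(Nat.mod_add_div i n).symm, (Nat.mod_add_div j n).symm]
  rw [hA, hB]

private lemma ctil_ne_zero {F : Type*} [Field F] (n : ℕ) [NeZero n] (ε lamA lamB : F)
    (hε : ε ≠ 0) (hA : lamA ≠ 0) (hB : lamB ≠ 0) (α β γ : ZMod n) (i j : ℕ) :
    ctil n ε lamA lamB α β γ i j ≠ 0 := by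
  unfold ctil
  exact mul_ne_zero (mul_ne_zero (pow_ne_zero _ hA) (pow_ne_zero _ hB)) (ee_ne_zero n ε hε _)

/-- With `D = F^σ T` the Pauli algebra on `T = (ℤ/n)²`
(`X_u · X_v = ε^{-u₁·v₀} • X_{u+v}`, so `σ(g,g)^{-n(n-1)/2} = ε^{g₁·g₀·n(n-1)/2}`):
given `τ ∈ GL₂(ℤ/n)` with `det τ = -1` and scalars with
`λ_a^n = σ(τa,τa)^{-n(n-1)/2}`, `λ_b^n = σ(τb,τb)^{-n(n-1)/2}`, the assignment
`X_a ↦ λ_a X_{τ(a)}`, `X_b ↦ λ_b X_{τ(b)}` extends to a `τ`-homogeneous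
anti-automorphism of `D`. -/
theorem stmt13 {F : Type*} [Field F] [IsAlgClosed F] (n : ℕ) [NeZero n]
    (hchar : (n : F) ≠ 0) (ε : F) (hε : IsPrimitiveRoot ε n)
    {D : Type*} [Ring D] [Algebra F D]
    (X : Module.Basis (Fin 2 → ZMod n) F D)
    (hmul : ∀ u v : Fin 2 → ZMod n,
      (X u : D) * X v = (ε ^ ((u 1).val * (v 0).val))⁻¹ • X (u + v))
    (τ : Matrix (Fin 2) (Fin 2) (ZMod n)) (hdet : τ.det = -1)
    (lamA lamB : F)
    (hla : lamA ^ n =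
      (ε ^ ((τ.mulVec ![1, 0] 1).val * (τ.mulVec ![1, 0] 0).val)) ^ (n * (n - 1) / 2))
    (hlb : lamB ^ n =
      (ε ^ ((τ.mulVec ![0, 1] 1).val * (τ.mulVec ![0, 1] 0).val)) ^ (n * (n - 1) / 2)) :
    ∃ ψ : D →ₗ[F] D, Function.Bijective ψ ∧
      (∀ x y : D, ψ (x * y) = ψ y * ψ x) ∧
      ψ (X ![1, 0]) = lamA • X (τ.mulVec ![1, 0]) ∧
      ψ (X ![0, 1]) = lamB • X (τ.mulVec ![0, 1]) ∧
      ∀ t : Fin 2 → ZMod n, ∃ c : F, c ≠ 0 ∧ ψ (X t) = c • X (τ.mulVec t) := by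
  classical
  have h1 : ε ^ n = 1 := hε.pow_eq_one
  have hε0 : ε ≠ 0 := by
    intro h
    rw [h, zero_pow (NeZero.ne n)] at h1
    exact zero_ne_one h1
  have hcast : ∀ a : ZMod n, ((a.val : ℕ) : ZMod n) = a := ZMod.natCast_rightInverse
  set p := τ 0 0 with hp
  set q := τ 0 1 with hq
  set r := τ 1 0 with hr
  set s := τ 1 1 with hs
  have hdet' : p * s - q * r = -1 := by
    rw [hp, hq, hr, hs, ← Matrix.det_fin_two τ]; exact hdet
  set α : ZMod n := -(r * p) with hα
  set β : ZMod n := -(s * q) with hβ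
  set γ : ZMod n := -(s * p) with hγ
  -- mulVec formulas
  have hmv0 : ∀ u : Fin 2 → ZMod n, τ.mulVec u 0 = p * u 0 + q * u 1 := by
    intro u; simp [Matrix.mulVec, dotProduct, Fin.sum_univ_two, hp, hq]
  have hmv1 : ∀ u : Fin 2 → ZMod n, τ.mulVec u 1 = r * u 0 + s * u 1 := by
    intro u; simp [Matrix.mulVec, dotProduct, Fin.sum_univ_two, hr, hs]
  have ha0 : (![1, 0] : Fin 2 → ZMod n) 0 = 1 := rfl
  have ha1 : (![1, 0] : Fin 2 → ZMod n) 1 = 0 := rfl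
  have hb0 : (![0, 1] : Fin 2 → ZMod n) 0 = 0 := rfl
  have hb1 : (![0, 1] : Fin 2 → ZMod n) 1 = 1 := rfl
  have hmva0 : τ.mulVec ![1, 0] 0 = p := by rw [hmv0, ha0, ha1]; ring
  have hmva1 : τ.mulVec ![1, 0] 1 = r := by rw [hmv1, ha0, ha1]; ring
  have hmvb0 : τ.mulVec ![0, 1] 0 = q := by rw [hmv0, hb0, hb1]; ring
  have hmvb1 : τ.mulVec ![0, 1] 1 = s := by rw [hmv1, hb0, hb1]; ring
  have hscn : sc n = n * (n - 1) / 2 := Finset.sum_range_id n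
  -- convert hypotheses on lamA, lamB
  have hla' : lamA ^ n * ee n ε (α * (sc n : ℕ)) = 1 := by
    rw [hla, hmva0, hmva1, ← pow_mul, hscn]
    rw [show ε ^ (r.val * p.val * (n * (n - 1) / 2)) =
      ee n ε ((r.val * p.val * (n * (n - 1) / 2) : ℕ)) from (ee_natCast n ε h1 _).symm]
    rw [show (α * ((n * (n - 1) / 2 : ℕ) : ZMod n)) =
        -(((r.val * p.val * (n * (n - 1) / 2) : ℕ)) : ZMod n) by
      push_cast [hα, hcast]; ring]
    rw [ee_neg n ε h1]
    exact mul_inv_cancel₀ (ee_ne_zero n ε hε0 _)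
  have hlb' : lamB ^ n * ee n ε (β * (sc n : ℕ)) = 1 := by
    rw [hlb, hmvb0, hmvb1, ← pow_mul, hscn]
    rw [show ε ^ (s.val * q.val * (n * (n - 1) / 2)) =
      ee n ε ((s.val * q.val * (n * (n - 1) / 2) : ℕ)) from (ee_natCast n ε h1 _).symm]
    rw [show (β * ((n * (n - 1) / 2 : ℕ) : ZMod n)) =
        -(((s.val * q.val * (n * (n - 1) / 2) : ℕ)) : ZMod n) by
      push_cast [hβ, hcast]; ring]
    rw [ee_neg n ε h1]
    exact mul_inv_cancel₀ (ee_ne_zero n ε hε0 _)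
  have hlamA : lamA ≠ 0 := by
    intro h
    rw [h, zero_pow (NeZero.ne n), zero_mul] at hla'
    exact zero_ne_one hla'
  have hlamB : lamB ≠ 0 := by
    intro h
    rw [h, zero_pow (NeZero.ne n), zero_mul] at hlb'
    exact zero_ne_one hlb'
  -- the scalar function
  set c : (Fin 2 → ZMod n) → F :=
    fun u => ctil n ε lamA lamB α β γ (u 0).val (u 1).val with hcdef
  have hc0 : ∀ u, c u ≠ 0 := fun u =>
    ctil_ne_zero n ε lamA lamB hε0 hlamA hlamB α β γ _ _
  -- cocycle identity
  have hcc : ∀ u v : Fin 2 → ZMod n, c (u + v) = c u * c v *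
      ee n ε (α * (u 0 * v 0) + β * (u 1 * v 1) + γ * (u 0 * v 1 + u 1 * v 0)) := by
    intro u v
    have e0 : (u + v) 0 = u 0 + v 0 := rfl
    have e1 : (u + v) 1 = u 1 + v 1 := rfl
    rw [hcdef]
    simp only [e0, e1]
    rw [ZMod.val_add, ZMod.val_add,
      ← ctil_mod n ε lamA lamB h1 α β γ hla' hlb' ((u 0).val + (v 0).val) ((u 1).val + (v 1).val),
      ctil_add n ε lamA lamB h1 α β γ]
    congr 1
    push_cast [hcast]
    ring
  -- the map
  set g : (Fin 2 → ZMod n) → D := fun t => c t • X (τ.mulVec t) with hgdef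
  set ψ : D →ₗ[F] D := X.constr F g with hψdef
  have hψX : ∀ t, ψ (X t) = c t • X (τ.mulVec t) := fun t => X.constr_basis F g t
  -- key scalar identity
  have hkey : ∀ u v : Fin 2 → ZMod n,
      (ε ^ ((u 1).val * (v 0).val))⁻¹ * c (u + v) =
      c v * c u * (ε ^ (((τ.mulVec v) 1).val * ((τ.mulVec u) 0).val))⁻¹ := by
    intro u v
    have l1 : ε ^ ((u 1).val * (v 0).val) = ee n ε (u 1 * v 0) := by
      rw [← ee_natCast n ε h1]
      congr 1
      push_cast [hcast]; ring
    have l2 : ε ^ (((τ.mulVec v) 1).val * ((τ.mulVec u) 0).val) =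
        ee n ε ((r * v 0 + s * v 1) * (p * u 0 + q * u 1)) := by
      rw [← ee_natCast n ε h1]
      congr 1
      push_cast [hcast]
      rw [hmv1, hmv0]
    rw [l1, l2, ← ee_neg n ε h1, ← ee_neg n ε h1, hcc]
    have harg : (-(u 1 * v 0) + (α * (u 0 * v 0) + β * (u 1 * v 1) + γ * (u 0 * v 1 + u 1 * v 0)))
        = -((r * v 0 + s * v 1) * (p * u 0 + q * u 1)) := by
      rw [hα, hβ, hγ]
      linear_combination (-(u 1 * v 0)) * hdet'
    rw [show ee n ε (-(u 1 * v 0)) *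
        (c u * c v * ee n ε (α * (u 0 * v 0) + β * (u 1 * v 1) + γ * (u 0 * v 1 + u 1 * v 0)))
        = c v * c u * ee n ε (-(u 1 * v 0) +
          (α * (u 0 * v 0) + β * (u 1 * v 1) + γ * (u 0 * v 1 + u 1 * v 0))) from by
      rw [ee_add n ε h1 (-(u 1 * v 0))
        (α * (u 0 * v 0) + β * (u 1 * v 1) + γ * (u 0 * v 1 + u 1 * v 0))]
      ring]
    rw [harg]
  -- anti-multiplicativity on basis
  have hanti : ∀ u v : Fin 2 → ZMod n, ψ (X u * X v) = ψ (X v) * ψ (X u) := by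
    intro u v
    rw [hmul u v, map_smul, hψX, hψX, hψX, smul_mul_assoc, mul_smul_comm, hmul,
      smul_smul, smul_smul, smul_smul]
    rw [show τ.mulVec v + τ.mulVec u = τ.mulVec (u + v) by
      rw [Matrix.mulVec_add]; exact add_comm _ _]
    congr 1
    linear_combination hkey u v
  -- anti-multiplicativity in general
  have hanti' : ∀ x y : D, ψ (x * y) = ψ y * ψ x := by
    have hB : (LinearMap.mul F D).compr₂ ψ =
        LinearMap.compl₁₂ (LinearMap.mul F D).flip ψ ψ := by
      apply Module.Basis.ext X
      intro u
      apply Module.Basis.ext X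
      intro v
      simp only [LinearMap.compr₂_apply, LinearMap.compl₁₂_apply, LinearMap.mul_apply',
        LinearMap.flip_apply]
      exact hanti u v
    intro x y
    have := LinearMap.congr_fun (LinearMap.congr_fun hB x) y
    simpa only [LinearMap.compr₂_apply, LinearMap.compl₁₂_apply, LinearMap.mul_apply',
      LinearMap.flip_apply] using this
  -- inverse map and bijectivity
  have hu : IsUnit τ.det := by rw [hdet]; exact isUnit_one.neg
  set τ' := τ⁻¹ with hτ'
  have hinv1 : ∀ t : Fin 2 → ZMod n, τ.mulVec (τ'.mulVec t) = t := by
    intro t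
    rw [hτ', Matrix.mulVec_mulVec, Matrix.mul_nonsing_inv τ hu, Matrix.one_mulVec]
  have hinv2 : ∀ t : Fin 2 → ZMod n, τ'.mulVec (τ.mulVec t) = t := by
    intro t
    rw [hτ', Matrix.mulVec_mulVec, Matrix.nonsing_inv_mul τ hu, Matrix.one_mulVec]
  set g' : (Fin 2 → ZMod n) → D := fun t => (c (τ'.mulVec t))⁻¹ • X (τ'.mulVec t) with hg'def
  set ψ' : D →ₗ[F] D := X.constr F g' with hψ'def
  have hψ'X : ∀ t, ψ' (X t) = (c (τ'.mulVec t))⁻¹ • X (τ'.mulVec t) :=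
    fun t => X.constr_basis F g' t
  have hcomp1 : ∀ t : Fin 2 → ZMod n, ψ (ψ' (X t)) = X t := by
    intro t
    rw [hψ'X, map_smul, hψX, smul_smul, hinv1, inv_mul_cancel₀ (hc0 _), one_smul]
  have hcomp2 : ∀ t : Fin 2 → ZMod n, ψ' (ψ (X t)) = X t := by
    intro t
    rw [hψX, map_smul, hψ'X, smul_smul, hinv2, mul_inv_cancel₀ (hc0 _), one_smul]
  have hid1 : ψ.comp ψ' = LinearMap.id := by
    apply Module.Basis.ext X
    intro t
    simpa using hcomp1 t
  have hid2 : ψ'.comp ψ = LinearMap.id := by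
    apply Module.Basis.ext X
    intro t
    simpa using hcomp2 t
  have hbij : Function.Bijective ψ := by
    refine Function.bijective_iff_has_inverse.mpr ⟨ψ', fun x => ?_, fun x => ?_⟩
    · simpa using LinearMap.congr_fun hid2 x
    · simpa using LinearMap.congr_fun hid1 x
  -- evaluations
  have hca : c ![1, 0] = lamA := by
    show ctil n ε lamA lamB α β γ ((![1, 0] : Fin 2 → ZMod n) 0).val
      ((![1, 0] : Fin 2 → ZMod n) 1).val = lamA
    have e0 : ((![1, 0] : Fin 2 → ZMod n) 0).val = 1 % n := by
      rw [ha0, ZMod.val_one_eq_one_mod]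
    have e1 : ((![1, 0] : Fin 2 → ZMod n) 1).val = 0 % n := by
      rw [ha1, ZMod.val_zero, Nat.zero_mod]
    rw [e0, e1, ← ctil_mod n ε lamA lamB h1 α β γ hla' hlb' 1 0]
    simp [ctil, sc, ee_zero]
  have hcb : c ![0, 1] = lamB := by
    show ctil n ε lamA lamB α β γ ((![0, 1] : Fin 2 → ZMod n) 0).val
      ((![0, 1] : Fin 2 → ZMod n) 1).val = lamB
    have e0 : ((![0, 1] : Fin 2 → ZMod n) 0).val = 0 % n := by
      rw [hb0, ZMod.val_zero, Nat.zero_mod]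
    have e1 : ((![0, 1] : Fin 2 → ZMod n) 1).val = 1 % n := by
      rw [hb1, ZMod.val_one_eq_one_mod]
    rw [e0, e1, ← ctil_mod n ε lamA lamB h1 α β γ hla' hlb' 0 1]
    simp [ctil, sc, ee_zero]
  refine ⟨ψ, hbij, hanti', ?_, ?_, fun t => ⟨c t, hc0 t, hψX t⟩⟩
  · rw [hψX, hca]
  · rw [hψX, hcb]
end

section
/- Let D be a central finite-dimensional graded-division algebra over an algebraically closed field F with abelian support T. If D admits a degree-preserving anti-automorphism or a degree-inverting anti-automorphism, then T is an elementary abelian 2-group. -/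
/-- A central finite-dimensional graded-division algebra over an
algebraically closed field with abelian support that admits a degree-preserving or a
degree-inverting anti-automorphism has elementary abelian 2-group support. -/
theorem stmt14 {F : Type*} [Field F] [IsAlgClosed F]
    {T : Type*} [CommGroup T] [DecidableEq T]
    {D : Type*} [Ring D] [Algebra F D] [FiniteDimensional F D]
    (𝒜 : T → Submodule F D) [DirectSum.Decomposition 𝒜]
    (hone : (1 : D) ∈ 𝒜 1)
    (hmul : ∀ {g h : T} {x y : D}, x ∈ 𝒜 g → y ∈ 𝒜 h → x * y ∈ 𝒜 (g * h))
    (hdiv : ∀ (g : T) (x : D), x ∈ 𝒜 g → x ≠ 0 → IsUnit x)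
    (hsupp : ∀ g : T, 𝒜 g ≠ ⊥)
    (hcentral : Subalgebra.center F D = ⊥)
    (ψ : D →ₗ[F] D) (hbij : Function.Bijective ψ)
    (hanti : ∀ x y : D, ψ (x * y) = ψ y * ψ x)
    (hhom : (∀ g : T, Submodule.map ψ (𝒜 g) = 𝒜 g) ∨
            (∀ g : T, Submodule.map ψ (𝒜 g) = 𝒜 g⁻¹)) :
    ∀ t : T, t * t = 1 := by
  classical
  haveI hD : Nontrivial D := by
    by_contra h
    rw [not_nontrivial_iff_subsingleton] at h
    exact hsupp 1 (eq_bot_iff.mpr fun x _ => (Submodule.mem_bot F).mpr (Subsingleton.elim x 0))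
  -- Workhorse: right-cancellation of grading degrees.
  have W : ∀ (g h : T) (x : D), x ∈ 𝒜 g → IsUnit x → ∀ u : D, u * x ∈ 𝒜 h →
      u ∈ 𝒜 (h * g⁻¹) := by
    intro g h x hx hxu u hux
    have hcomp : ∀ k : T, k * g ≠ h → (DirectSum.decompose 𝒜 u k : D) = 0 := by
      intro k hkg
      by_contra hne
      have hksupp : k ∈ (DirectSum.decompose 𝒜 u).support := by
        rw [DFinsupp.mem_support_iff]
        intro h0
        exact hne (by rw [h0]; rfl)
      have h1 : u * x = ∑ j ∈ (DirectSum.decompose 𝒜 u).support,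
          (DirectSum.decompose 𝒜 u j : D) * x := by
        conv_lhs => rw [← DirectSum.sum_support_decompose 𝒜 u]
        rw [Finset.sum_mul]
      have h2 : (DirectSum.decompose 𝒜 (u * x) (k * g) : D) = 0 :=
        DirectSum.decompose_of_mem_ne 𝒜 hux (Ne.symm hkg)
      have h3 : (DirectSum.decompose 𝒜 (u * x) (k * g) : D)
          = (DirectSum.decompose 𝒜 u k : D) * x := by
        conv_lhs => rw [h1]
        rw [DirectSum.decompose_sum, DFinsupp.finset_sum_apply,
          AddSubmonoidClass.coe_finset_sum]
        rw [Finset.sum_eq_single_of_mem k hksupp fun j _ hjk =>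
          DirectSum.decompose_of_mem_ne 𝒜 (hmul (SetLike.coe_mem _) hx)
            fun e => hjk (mul_right_cancel e)]
        exact DirectSum.decompose_of_mem_same 𝒜 (hmul (SetLike.coe_mem _) hx)
      have h4 : (DirectSum.decompose 𝒜 u k : D) * x = 0 := by rw [← h3, h2]
      exact hne ((IsUnit.mul_left_eq_zero hxu).mp h4)
    rw [← DirectSum.sum_support_decompose 𝒜 u]
    apply Submodule.sum_mem
    intro k _
    by_cases hkk : k * g = h
    · have hk : k = h * g⁻¹ := by rw [← hkk]; group
      exact hk ▸ SetLike.coe_mem _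
    · rw [hcomp k hkk]; exact Submodule.zero_mem _
  -- The identity component is the scalars.
  have key : ∀ (n : ℕ) (x : D), x ∈ 𝒜 1 → ∀ p : Polynomial F, p.Monic → p.natDegree ≤ n →
      Polynomial.aeval x p = 0 → ∃ c : F, x = c • 1 := by
    intro n
    induction n with
    | zero =>
      intro x hx p hm hd he
      rw [(Polynomial.Monic.natDegree_eq_zero hm).mp (Nat.le_zero.mp hd)] at he
      simp at he
    | succ n ih =>
      intro x hx p hm hd he
      by_cases h0 : p.natDegree ≤ n
      · exact ih x hx p hm h0 he
      push_neg at h0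
      have hdeg : p.degree ≠ 0 :=
        Polynomial.degree_ne_of_natDegree_ne (n := 0) (by omega)
      obtain ⟨c, hc⟩ := IsAlgClosed.exists_root p hdeg
      obtain ⟨q, hq⟩ := Polynomial.dvd_iff_isRoot.mpr hc
      have hqm : q.Monic :=
        Polynomial.Monic.of_mul_monic_left (Polynomial.monic_X_sub_C c) (hq ▸ hm)
      have hdq : q.natDegree ≤ n := by
        have := Polynomial.Monic.natDegree_mul (Polynomial.monic_X_sub_C c) hqm
        rw [← hq] at this
        rw [Polynomial.natDegree_X_sub_C] at this
        omega
      have he2 : (x - c • 1) * Polynomial.aeval x q = 0 := by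
        rw [← he, hq]
        simp [Algebra.algebraMap_eq_smul_one]
      by_cases hd0 : x - c • 1 = 0
      · exact ⟨c, by rw [← sub_eq_zero]; exact hd0⟩
      · have hu : IsUnit (x - c • 1) :=
          hdiv 1 _ (Submodule.sub_mem _ hx (Submodule.smul_mem _ c hone)) hd0
        exact ih x hx q hqm hdq ((IsUnit.mul_right_eq_zero hu).mp he2)
  have B : ∀ x : D, x ∈ 𝒜 1 → ∃ c : F, x = c • 1 := by
    intro x hx
    obtain ⟨p, hm, he⟩ := Algebra.IsIntegral.isIntegral (R := F) x
    exact key p.natDegree x hx p hm le_rfl (by rwa [Polynomial.aeval_def])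
  -- Homogeneous components are one-dimensional.
  have C : ∀ (g : T) (x : D), x ∈ 𝒜 g → x ≠ 0 → ∀ y : D, y ∈ 𝒜 g → ∃ c : F, y = c • x := by
    intro g x hx hx0 y hy
    obtain ⟨u, hu⟩ := hdiv g x hx hx0
    have hux : (↑u⁻¹ : D) * x = 1 := by rw [← hu]; exact u.inv_mul
    have hyx : (y * ↑u⁻¹) * x = y := by rw [mul_assoc, hux, mul_one]
    have hw : y * ↑u⁻¹ ∈ 𝒜 (g * g⁻¹) :=
      W g g x hx ⟨u, hu⟩ (y * ↑u⁻¹) (by rw [hyx]; exact hy)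
    rw [mul_inv_cancel] at hw
    obtain ⟨c, hc⟩ := B _ hw
    exact ⟨c, by rw [← hyx, hc, smul_mul_assoc, one_mul]⟩
  -- Choose homogeneous units.
  have hex : ∀ g : T, ∃ x : D, x ∈ 𝒜 g ∧ x ≠ 0 := by
    intro g
    obtain ⟨x, hx, hx0⟩ := Submodule.exists_mem_ne_zero_of_ne_bot (hsupp g)
    exact ⟨x, hx, hx0⟩
  choose X hX hX0 using hex
  have hXu : ∀ g : T, IsUnit (X g) := fun g => hdiv g (X g) (hX g) (hX0 g)
  -- The commutation factor β.
  have hβex : ∀ g h : T, ∃ c : F, X g * X h = c • (X h * X g) := by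
    intro g h
    apply C (h * g) (X h * X g) (hmul (hX h) (hX g)) ((hXu h).mul (hXu g)).ne_zero
    rw [mul_comm h g]
    exact hmul (hX g) (hX h)
  choose β hβ using hβex
  have hcancel : ∀ (c d : F) (v : D), v ≠ 0 → c • v = d • v → c = d := by
    intro c d v hv h
    have h' : (c - d) • v = 0 := by rw [sub_smul, h, sub_self]
    rcases smul_eq_zero.mp h' with h'' | h''
    · exact sub_eq_zero.mp h''
    · exact absurd h'' hv
  have hβ0 : ∀ g h : T, β g h ≠ 0 := by
    intro g h h0
    apply ((hXu g).mul (hXu h)).ne_zero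
    rw [hβ g h, h0, zero_smul]
  have C' : ∀ (g : T) (y : D), y ∈ 𝒜 g → ∃ c : F, y = c • X g :=
    fun g y hy => C g (X g) (hX g) (hX0 g) y hy
  have hcomm : ∀ (g h : T) (x y : D), x ∈ 𝒜 g → y ∈ 𝒜 h → x * y = β g h • (y * x) := by
    intro g h x y hx hy
    obtain ⟨a, ha⟩ := C' g x hx
    obtain ⟨b, hb⟩ := C' h y hy
    rw [ha, hb, smul_mul_assoc, smul_mul_assoc, mul_smul_comm, mul_smul_comm,
      smul_smul, smul_smul, hβ g h, smul_smul, smul_smul]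
    congr 1
    ring
  have hβmul : ∀ g h k : T, β g (h * k) = β g h * β g k := by
    intro g h k
    have e1 : X g * (X h * X k) = β g (h * k) • (X h * X k * X g) :=
      hcomm g (h * k) _ _ (hX g) (hmul (hX h) (hX k))
    have e2 : X g * (X h * X k) = (β g h * β g k) • (X h * X k * X g) := by
      rw [← mul_assoc, hcomm g h _ _ (hX g) (hX h), smul_mul_assoc, mul_assoc,
        hcomm g k _ _ (hX g) (hX k), mul_smul_comm, smul_smul, ← mul_assoc]
    exact hcancel _ _ _ (((hXu h).mul (hXu k)).mul (hXu g)).ne_zero (e1.symm.trans e2)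
  have hβswap : ∀ g h : T, β g h * β h g = 1 := by
    intro g h
    have e : (β g h * β h g) • (X g * X h) = (1 : F) • (X g * X h) := by
      rw [one_smul]
      conv_rhs => rw [hβ g h, hβ h g, smul_smul]
    exact hcancel _ _ _ ((hXu g).mul (hXu h)).ne_zero e
  have hβ1 : ∀ g : T, β g 1 = 1 := by
    intro g
    have h1 := hβmul g 1 1
    rw [one_mul] at h1
    have h2 : β g 1 * 1 = β g 1 * β g 1 := by rw [mul_one]; exact h1
    exact (mul_left_cancel₀ (hβ0 g 1) h2).symm
  have hβswap' : ∀ g h : T, β g h = (β h g)⁻¹ :=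
    fun g h => eq_inv_of_mul_eq_one_left (hβswap g h)
  have hβinv : ∀ g h : T, β g h⁻¹ = (β g h)⁻¹ := by
    intro g h
    apply eq_inv_of_mul_eq_one_left
    rw [← hβmul, inv_mul_cancel, hβ1]
  have hβmul' : ∀ g h k : T, β (g * h) k = β g k * β h k := by
    intro g h k
    rw [hβswap' (g * h) k, hβmul k g h, mul_inv, ← hβswap' g k, ← hβswap' h k]
  have hβ1' : ∀ h : T, β 1 h = 1 := by
    intro h
    rw [hβswap' 1 h, hβ1, inv_one]
  have hβinv₂ : ∀ g h : T, β g⁻¹ h = (β g h)⁻¹ := by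
    intro g h
    apply eq_inv_of_mul_eq_one_left
    rw [← hβmul', inv_mul_cancel, hβ1']
  -- Nondegeneracy of β, from centrality.
  have hnd : ∀ t : T, (∀ h : T, β t h = 1) → t = 1 := by
    intro t ht
    have hc : ∀ x : D, X t * x = x * X t := by
      refine DirectSum.Decomposition.inductionOn 𝒜 (by simp) ?_ ?_
      · rintro i ⟨m, hm⟩
        show X t * m = m * X t
        rw [hcomm t i (X t) m (hX t) hm, ht i, one_smul]
      · intro a b ha hb
        rw [mul_add, add_mul, ha, hb]
    have hZ : X t ∈ Subalgebra.center F D := Subalgebra.mem_center_iff.mpr fun y => (hc y).symm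
    rw [hcentral, Algebra.mem_bot] at hZ
    obtain ⟨c, hcx⟩ := hZ
    have h1 : X t ∈ 𝒜 1 := by
      rw [← hcx, Algebra.algebraMap_eq_smul_one]
      exact Submodule.smul_mem _ _ hone
    exact DirectSum.degree_eq_of_mem_mem 𝒜 (hX t) h1 (hX0 t)
  -- The anti-automorphism, uniformly in the two cases.
  obtain ⟨f, hf1, hf2⟩ : ∃ f : T → T, (∀ g, ψ (X g) ∈ 𝒜 (f g)) ∧
      (∀ g h, β (f g) (f h) = β g h) := by
    rcases hhom with hh | hh
    · refine ⟨id, fun g => ?_, fun g h => rfl⟩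
      show ψ (X g) ∈ 𝒜 g
      rw [← hh g]
      exact Submodule.mem_map_of_mem (hX g)
    · refine ⟨fun g => g⁻¹, fun g => ?_, fun g h => ?_⟩
      · show ψ (X g) ∈ 𝒜 g⁻¹
        rw [← hh g]
        exact Submodule.mem_map_of_mem (hX g)
      · show β g⁻¹ h⁻¹ = β g h
        rw [hβinv₂, hβinv, inv_inv]
  choose μ hμ using fun g => C' (f g) (ψ (X g)) (hf1 g)
  have hμ0 : ∀ g, μ g ≠ 0 := by
    intro g h0
    apply hX0 g
    apply hbij.injective
    rw [hμ g, h0, zero_smul, map_zero]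
  -- The key computation: β has values ±1.
  have hβsq : ∀ g h : T, β g h * β g h = 1 := by
    intro g h
    have e1 : ψ (X g * X h) = (μ h * μ g) • (X (f h) * X (f g)) := by
      rw [hanti, hμ g, hμ h, smul_mul_assoc, mul_smul_comm, smul_smul]
    have e2 : ψ (X g * X h) = (β g h * β g h * (μ h * μ g)) • (X (f h) * X (f g)) := by
      rw [hcomm g h _ _ (hX g) (hX h), map_smul, hanti, hμ g, hμ h,
        smul_mul_assoc, mul_smul_comm, smul_smul, smul_smul,
        hcomm (f g) (f h) _ _ (hX (f g)) (hX (f h)), hf2, smul_smul]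
      congr 1
      ring
    have e3 := hcancel _ _ _ (((hXu (f h)).mul (hXu (f g))).ne_zero) (e1.symm.trans e2)
    have e4 : (1 : F) * (μ h * μ g) = (β g h * β g h) * (μ h * μ g) := by
      rw [one_mul]; exact e3
    exact (mul_right_cancel₀ (mul_ne_zero (hμ0 h) (hμ0 g)) e4).symm
  -- Conclusion.
  intro t
  apply hnd
  intro h
  rw [hβmul', hβsq]
end

section
/- Let D be a graded-division algebra over a field F with support a group T, graded by an abelian group, and let V be a G-graded right D-module finite-dimensional over D with V ≠ 0. Let R = End_D(V) with its induced G-grading, and let V* = Hom_D(V, D) be the dual, viewed as a right R-module via ⟨fr, v⟩ = ⟨f, rv⟩. Then V* is a graded-simple right R-module: its only graded R-submodules are 0 and V*. -/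
open MulOpposite

/-- The homogeneous component of degree `g` of the dual `V* = Hom_D(V, D)` of a graded
right `D`-module `V`: the `D`-linear maps `f` with `f (V_h) ⊆ D_{g·h}` for all `h`. -/
def dualComponent {F : Type*} [Field F] {G : Type*} [CommGroup G]
    {D : Type*} [Ring D] [Algebra F D]
    (𝒟 : G → Submodule F D)
    {V : Type*} [AddCommGroup V] [Module F V] [Module Dᵐᵒᵖ V]
    [SMulCommClass Dᵐᵒᵖ F D]
    (𝒱 : G → Submodule F V) (g : G) : Submodule F (V →ₗ[Dᵐᵒᵖ] D) where
  carrier := {f | ∀ (h : G), ∀ v ∈ 𝒱 h, f v ∈ 𝒟 (g * h)}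
  add_mem' := by
    intro f₁ f₂ h₁ h₂ h v hv
    simpa using (𝒟 (g * h)).add_mem (h₁ h v hv) (h₂ h v hv)
  zero_mem' := by intro h v hv; simp
  smul_mem' := by
    intro c f hf h v hv
    simpa using (𝒟 (g * h)).smul_mem c (hf h v hv)

/-- Let `D` be a graded-division algebra, `V ≠ 0` a graded right
`D`-module which is finite-dimensional over `D`, and `R = End_D(V)`. Then the dual
`V* = Hom_D(V, D)`, as a right `R`-module via `f · r = f ∘ r`, is graded-simple: its
only graded `R`-submodules are `0` and everything. -/
theorem stmt16 {F : Type*} [Field F] {G : Type*} [CommGroup G] [DecidableEq G]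
    {D : Type*} [Ring D] [Algebra F D]
    (𝒟 : G → Submodule F D) [DirectSum.Decomposition 𝒟]
    (hone : (1 : D) ∈ 𝒟 1)
    (hDmul : ∀ {g h : G} {x y : D}, x ∈ 𝒟 g → y ∈ 𝒟 h → x * y ∈ 𝒟 (g * h))
    (hdiv : ∀ (g : G) (x : D), x ∈ 𝒟 g → x ≠ 0 → IsUnit x)
    {V : Type*} [AddCommGroup V] [Module F V] [Module Dᵐᵒᵖ V]
    [SMulCommClass Dᵐᵒᵖ F V] [SMulCommClass Dᵐᵒᵖ F D]
    [Module.Finite Dᵐᵒᵖ V] [Nontrivial V]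
    (𝒱 : G → Submodule F V) [DirectSum.Decomposition 𝒱]
    (hVmod : ∀ {g h : G} (v : V) (d : D),
      v ∈ 𝒱 g → d ∈ 𝒟 h → (op d) • v ∈ 𝒱 (g * h))
    (W : Submodule F (V →ₗ[Dᵐᵒᵖ] D))
    (hWR : ∀ f ∈ W, ∀ r : V →ₗ[Dᵐᵒᵖ] V, f.comp r ∈ W)
    (hWgr : W ≤ ⨆ g : G, W ⊓ dualComponent 𝒟 𝒱 g) :
    W = ⊥ ∨ W = ⊤ := by
  by_cases hW : W = ⊥
  · exact Or.inl hW
  right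
  -- extract a nonzero homogeneous element of W
  have hex : ∃ g : G, ∃ f : V →ₗ[Dᵐᵒᵖ] D,
      f ∈ W ∧ f ∈ dualComponent 𝒟 𝒱 g ∧ f ≠ 0 := by
    by_contra hc
    push_neg at hc
    apply hW
    rw [eq_bot_iff]
    refine hWgr.trans ?_
    refine iSup_le fun g => ?_
    rintro f ⟨hfW, hfg⟩
    exact hc g f hfW hfg
  obtain ⟨g, f, hfW, hfg, hf0⟩ := hex
  have hv : ∃ v : V, f v ≠ 0 := by
    by_contra hc
    push_neg at hc
    exact hf0 (LinearMap.ext hc)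
  obtain ⟨v, hv⟩ := hv
  obtain ⟨h, v₀, hv₀V, hfv₀⟩ : ∃ h : G, ∃ v₀ : V, v₀ ∈ 𝒱 h ∧ f v₀ ≠ 0 := by
    classical
    by_contra hc
    push_neg at hc
    apply hv
    conv_lhs => rw [← DirectSum.sum_support_decompose 𝒱 v]
    rw [map_sum]
    exact Finset.sum_eq_zero fun i _ => hc i _ (SetLike.coe_mem _)
  obtain ⟨u, hu⟩ := hdiv (g * h) (f v₀) (hfg h v₀ hv₀V) hfv₀
  rw [eq_top_iff]
  intro φ _
  let r : V →ₗ[Dᵐᵒᵖ] V :=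
    { toFun := fun w => op ((↑u⁻¹ : D) * φ w) • v₀
      map_add' := fun x y => by
        simp [mul_add, op_add, add_smul]
      map_smul' := fun a x => by
        induction a using MulOpposite.rec' with
        | h b =>
          simp only [map_smul, RingHom.id_apply, op_smul_eq_mul, smul_smul, ← op_mul,
            mul_assoc] }
  have key : f.comp r = φ := by
    ext w
    show f (op ((↑u⁻¹ : D) * φ w) • v₀) = φ w
    rw [map_smul, op_smul_eq_mul, ← hu]
    exact u.mul_inv_cancel_left _
  exact key ▸ hWR f hfW r
end
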